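/- (Recursion at a wall) In the setting where λ⁺, λ⁻ are separated weights corresponding to a small cap whose two vertices, labelled (∨,∧) in x_{λ⁺} and (∧,∨) in x_{λ⁻}, sit at adjacent positions, one has for all weights μ⁺, μ⁻ in the block that differ only in the same two positions: d_{λ⁺μ⁺}(q) = q^{−1} d_{λ⁻μ⁺}(q) + d_{λ⁻μ⁻}(q) and d_{λ⁺μ⁻}(q) = q d_{λ⁻μ⁻}(q) + d_{λ⁻μ⁺}(q). -/

import Mathlib

/-- The four labels `∘, ×, ∨, ∧` used in weight diagrams. -/
inductive Lbl : Type
  | circ  -- `∘`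
  | times -- `×`
  | vee   -- `∨`
  | wedge -- `∧`
  deriving DecidableEq

/-- Index set `ℤ ∖ {0}`. -/
def Zstar : Type := {i : ℤ // i ≠ 0}

/-- `A⁺`: elements with `⋯ > x_{−2} > x_{−1}` and `x_1 > x_2 > ⋯`. -/
def Aplus (x : Zstar → ℤ) : Prop :=
  ∀ i j : Zstar, i.1 < j.1 → (j.1 < 0 ∨ 0 < i.1) → x j < x i

/-- `I_∨(x) = {x_i : i < 0}`. -/
def Ivee (x : Zstar → ℤ) : Set ℤ := {v | ∃ i : Zstar, i.1 < 0 ∧ x i = v}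

/-- `I_∧(x) = {x_i : i > 0}`. -/
def Iwedge (x : Zstar → ℤ) : Set ℤ := {v | ∃ i : Zstar, 0 < i.1 ∧ x i = v}

open Classical in
/-- The diagram of `x ∈ A⁺`: vertex `n` is labelled `∘`, `×`, `∨` or `∧`
according to whether `n` lies in neither, both, only `I_∨`, or only `I_∧`. -/
noncomputable def diagram (x : Zstar → ℤ) : ℤ → Lbl := fun n =>
  if n ∈ Ivee x then (if n ∈ Iwedge x then Lbl.times else Lbl.vee)
  else (if n ∈ Iwedge x then Lbl.wedge else Lbl.circ)

/-- One covering move of the partial order on diagrams: `d' ` is obtained from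
`d` by swapping a `∨` and a `∧` so that the `∧` moves to the right. -/
def Step (d d' : ℤ → Lbl) : Prop :=
  ∃ i j : ℤ, i < j ∧ d i = Lbl.wedge ∧ d j = Lbl.vee ∧
    d' i = Lbl.vee ∧ d' j = Lbl.wedge ∧ ∀ n, n ≠ i → n ≠ j → d' n = d n

/-- Strict order generated by the swapping moves. -/
def DiagLt (d d' : ℤ → Lbl) : Prop := Relation.TransGen Step d d'

/-- Non-strict order generated by the swapping moves. -/
def DiagLe (d d' : ℤ → Lbl) : Prop := Relation.ReflTransGen Step d d'

/-- The weight `x_λ = λ̄ + ρ_δ` attached to a bipartition `(λL, λR)` (encoded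
as weakly decreasing eventually-zero sequences indexed from 0):
`x_{-k} = k - λ^L_k` and `x_k = λ^R_k + δ - k + 1` for `k ≥ 1`. -/
def xBipart (δ : ℤ) (lamL lamR : ℕ → ℕ) : Zstar → ℤ := fun i =>
  if 0 < i.1 then (lamR (i.1.toNat - 1) : ℤ) + (δ - i.1 + 1)
  else (-i.1) - (lamL ((-i.1).toNat - 1) : ℤ)

/-- A bipartition: both sequences weakly decreasing and eventually zero. -/
def IsBipartition (lamL lamR : ℕ → ℕ) : Prop :=
  Antitone lamL ∧ Antitone lamR ∧
    (∃ N, ∀ i, N ≤ i → lamL i = 0) ∧ (∃ N, ∀ i, N ≤ i → lamR i = 0)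

/-- A label is trivial if it is `∘` or `×`. -/
def Triv (s : Lbl) : Prop := s = Lbl.circ ∨ s = Lbl.times

/-- Boundary condition: labelled `∧` for `n ≪ 0` and `∨` for `n ≫ 0`. -/
def Bdd (d : ℤ → Lbl) : Prop :=
  ∃ N : ℤ, (∀ n : ℤ, n ≤ -N → d n = Lbl.wedge) ∧ (∀ n : ℤ, N ≤ n → d n = Lbl.vee)

/-- `n` is an endpoint of a cap in `C`. -/
def OnCap (C : Set (ℤ × ℤ)) (n : ℤ) : Prop := ∃ p ∈ C, p.1 = n ∨ p.2 = n

/-- `(i,j)` is a neighbouring `∨∧` pair relative to the existing caps `C`: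
`i < j`, `i` is labelled `∨`, `j` is labelled `∧`, neither is already on a
cap, and every vertex strictly between them is labelled `∘` or `×` or already
lies on a cap of `C`. -/
def ValidPair (d : ℤ → Lbl) (C : Set (ℤ × ℤ)) (i j : ℤ) : Prop :=
  i < j ∧ d i = Lbl.vee ∧ d j = Lbl.wedge ∧ ¬ OnCap C i ∧ ¬ OnCap C j ∧
    ∀ k, i < k → k < j → Triv (d k) ∨ OnCap C k

/-- One step of the cap construction: join a neighbouring `∨∧` pair by a cap. -/
def AddCap (d : ℤ → Lbl) (C C' : Set (ℤ × ℤ)) : Prop :=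
  ∃ i j, ValidPair d C i j ∧ C' = insert (i, j) C

/-- `C` is reachable from the empty configuration by cap-adding steps. -/
def Reachable (d : ℤ → Lbl) (C : Set (ℤ × ℤ)) : Prop :=
  Relation.ReflTransGen (AddCap d) ∅ C

/-- No neighbouring `∨∧` pair remains. -/
def Complete (d : ℤ → Lbl) (C : Set (ℤ × ℤ)) : Prop :=
  ¬ ∃ i j, ValidPair d C i j

/-- `C` is the (completed) cap diagram of `d`. -/
def IsCapDiagram (d : ℤ → Lbl) (C : Set (ℤ × ℤ)) : Prop :=
  Reachable d C ∧ Complete d C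

/-- The labelled cap diagram `c x` is oriented, where `c` is the cap diagram
(caps `C`, rays at the uncapped nontrivial vertices of the underlying weight
`d`) and `x` is a weight diagram: free vertices of `c` are labelled `∘` or `×`
in `x`; each cap carries exactly one `∨` and one `∧`; each ray vertex carries
`∨` or `∧`; and no two rays are labelled `∨` then `∧` from left to right. -/
def Oriented (d : ℤ → Lbl) (C : Set (ℤ × ℤ)) (x : ℤ → Lbl) : Prop :=
  (∀ n, ¬ OnCap C n → Triv (d n) → Triv (x n)) ∧
  (∀ p ∈ C, (x p.1 = Lbl.vee ∧ x p.2 = Lbl.wedge) ∨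
            (x p.1 = Lbl.wedge ∧ x p.2 = Lbl.vee)) ∧
  (∀ n, ¬ OnCap C n → ¬ Triv (d n) → (x n = Lbl.vee ∨ x n = Lbl.wedge)) ∧
  (∀ m n : ℤ, m < n → ¬ OnCap C m → ¬ OnCap C n → ¬ Triv (d m) → ¬ Triv (d n) →
    ¬ (x m = Lbl.vee ∧ x n = Lbl.wedge))

/-- The number of clockwise caps (labelled `∧` then `∨`) of the labelled cap
diagram: its degree. -/
noncomputable def clockCount (C : Set (ℤ × ℤ)) (x : ℤ → Lbl) : ℕ :=
  {p ∈ C | x p.1 = Lbl.wedge ∧ x p.2 = Lbl.vee}.ncard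

/-- Two weight diagrams lie in the same block (`W`-orbit): they agree on
trivial labels, differ in finitely many places, and are obtained from each
other by permuting a finite number of `∧`s and `∨`s pairwise. -/
def SameBlock (d d' : ℤ → Lbl) : Prop :=
  (∀ n, Triv (d n) → d' n = d n) ∧ (∀ n, Triv (d' n) → d n = d' n) ∧
  {n | d n ≠ d' n}.Finite ∧
  {n | d n = Lbl.wedge ∧ d' n = Lbl.vee}.ncard
    = {n | d n = Lbl.vee ∧ d' n = Lbl.wedge}.ncard

open Classical in
/-- The polynomial `d_{λμ}(q)` (as a Laurent polynomial in `q`): it is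
`q^{deg(c_λ x_μ)}` if `λ, μ` are in the same block and `c_λ x_μ` is oriented,
and `0` otherwise.  Here `d` is the diagram of `x_λ`, `C` its cap diagram and
`x` the diagram of `x_μ`. -/
noncomputable def dPol (d : ℤ → Lbl) (C : Set (ℤ × ℤ)) (x : ℤ → Lbl) :
    LaurentPolynomial ℤ :=
  if SameBlock d x ∧ Oriented d C x then LaurentPolynomial.T (clockCount C x)
  else 0


/-! ### Auxiliary development -/

def Caps (d : ℤ → Lbl) (C : Set (ℤ × ℤ)) : Prop :=
  ∀ p ∈ C, p.1 < p.2 ∧ d p.1 = Lbl.vee ∧ d p.2 = Lbl.wedge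

def Disj (C : Set (ℤ × ℤ)) : Prop :=
  ∀ p ∈ C, ∀ q ∈ C, p ≠ q →
    p.1 ≠ q.1 ∧ p.1 ≠ q.2 ∧ p.2 ≠ q.1 ∧ p.2 ≠ q.2

def Nest (d : ℤ → Lbl) (C : Set (ℤ × ℤ)) : Prop :=
  ∀ p ∈ C, ∀ k, p.1 < k → k < p.2 → ¬ Triv (d k) →
    ∃ q ∈ C, p.1 < q.1 ∧ q.2 < p.2 ∧ (k = q.1 ∨ k = q.2)

def Sorted (d : ℤ → Lbl) (C : Set (ℤ × ℤ)) : Prop :=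
  ∀ m n : ℤ, m < n → d m = Lbl.vee → d n = Lbl.wedge →
    ¬ OnCap C m → ¬ OnCap C n → False

def Struct (d : ℤ → Lbl) (C : Set (ℤ × ℤ)) : Prop :=
  Caps d C ∧ Disj C ∧ Nest d C ∧ Sorted d C

lemma not_triv_iff {s : Lbl} : ¬ Triv s ↔ (s = Lbl.vee ∨ s = Lbl.wedge) := by
  cases s <;> simp [Triv]

lemma triv_vee : ¬ Triv Lbl.vee := by simp [Triv]
lemma triv_wedge : ¬ Triv Lbl.wedge := by simp [Triv]

lemma onCap_insert {p : ℤ × ℤ} {C : Set (ℤ × ℤ)} {n : ℤ} :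
    OnCap (insert p C) n ↔ (p.1 = n ∨ p.2 = n) ∨ OnCap C n := by
  constructor
  · rintro ⟨q, hq, h⟩
    rcases hq with rfl | hq
    · exact Or.inl h
    · exact Or.inr ⟨q, hq, h⟩
  · rintro (h | ⟨q, hq, h⟩)
    · exact ⟨p, Set.mem_insert _ _, h⟩
    · exact ⟨q, Set.mem_insert_of_mem _ hq, h⟩

lemma onCap_mono {C C' : Set (ℤ × ℤ)} (h : C ⊆ C') {n : ℤ} :
    OnCap C n → OnCap C' n := fun ⟨q, hq, hn⟩ => ⟨q, h hq, hn⟩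

/-- Invariants preserved by the cap construction. -/
lemma reach_inv {d : ℤ → Lbl} {C : Set (ℤ × ℤ)} (h : Reachable d C) :
    Caps d C ∧ Disj C ∧ Nest d C := by
  induction h with
  | refl => exact ⟨fun p hp => absurd hp (Set.notMem_empty p),
      fun p hp => absurd hp (Set.notMem_empty p),
      fun p hp => absurd hp (Set.notMem_empty p)⟩
  | @tail D D' _ hstep ih =>
    obtain ⟨hCaps, hDisj, hNest⟩ := ih
    obtain ⟨a, b, hv, rfl⟩ := hstep
    obtain ⟨hab, hda, hdb, hna, hnb, hint⟩ := hv
    have hnewCaps : Caps d (insert (a, b) D) := by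
      rintro p (rfl | hp)
      · exact ⟨hab, hda, hdb⟩
      · exact hCaps p hp
    refine ⟨hnewCaps, ?_, ?_⟩
    · -- Disj
      have key : ∀ q ∈ D, (a, b) ≠ q →
          a ≠ q.1 ∧ a ≠ q.2 ∧ b ≠ q.1 ∧ b ≠ q.2 := by
        intro q hq _
        refine ⟨?_, ?_, ?_, ?_⟩ <;> rintro rfl
        · exact hna ⟨q, hq, Or.inl rfl⟩
        · exact hna ⟨q, hq, Or.inr rfl⟩
        · exact hnb ⟨q, hq, Or.inl rfl⟩
        · exact hnb ⟨q, hq, Or.inr rfl⟩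
      rintro p (rfl | hp) q (rfl | hq) hpq
      · exact absurd rfl hpq
      · exact key q hq hpq
      · obtain ⟨h1, h2, h3, h4⟩ := key p hp (Ne.symm hpq)
        exact ⟨h1.symm, h3.symm, h2.symm, h4.symm⟩
      · exact hDisj p hp q hq hpq
    · -- Nest
      rintro p (rfl | hp) k hk1 hk2 hk3
      · -- the new cap: interior points are on old caps
        rcases hint k hk1 hk2 with htriv | ⟨q, hq, hkq⟩
        · exact absurd htriv hk3
        · refine ⟨q, Set.mem_insert_of_mem _ hq, ?_, ?_, hkq.imp Eq.symm Eq.symm⟩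
          · -- a < q.1
            rcases lt_trichotomy a q.1 with h | h | h
            · exact h
            · exact absurd ⟨q, hq, Or.inl h.symm⟩ hna
            · -- q.1 < a : then a interior of q, so a on a cap: contra
              exfalso
              have haq2 : a < q.2 := by
                rcases hkq with rfl | rfl
                · exact hk1.trans_le (le_of_lt (hCaps q hq).1)
                · exact hk1
              obtain ⟨r, hr, _, _, har⟩ :=
                hNest q hq a h haq2 (by rw [hda]; exact triv_vee)
              exact hna ⟨r, hr, har.imp Eq.symm Eq.symm⟩
          · -- q.2 < b
            rcases lt_trichotomy q.2 b with h | h | h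
            · exact h
            · exact absurd ⟨q, hq, Or.inr h⟩ hnb
            · exfalso
              have hbq1 : q.1 < b := by
                rcases hkq with rfl | rfl
                · exact hk2
                · exact lt_trans (hCaps q hq).1 hk2
              obtain ⟨r, hr, _, _, hbr⟩ :=
                hNest q hq b hbq1 h (by rw [hdb]; exact triv_wedge)
              exact hnb ⟨r, hr, hbr.imp Eq.symm Eq.symm⟩
      · obtain ⟨q, hq, h1, h2, h3⟩ := hNest p hp k hk1 hk2 hk3
        exact ⟨q, Set.mem_insert_of_mem _ hq, h1, h2, h3⟩

lemma complete_sorted {d : ℤ → Lbl} {C : Set (ℤ × ℤ)} (h : Complete d C) :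
    Sorted d C := by
  intro m n hmn hdm hdn hcm hcn
  -- strong induction on the gap
  have main : ∀ g : ℕ, ∀ m n : ℤ, (n - m).toNat = g → m < n → d m = Lbl.vee →
      d n = Lbl.wedge → ¬ OnCap C m → ¬ OnCap C n → False := by
    intro g
    induction g using Nat.strong_induction_on with
    | _ g ih =>
      intro m n hg hmn hdm hdn hcm hcn
      have hnv : ¬ ValidPair d C m n := fun hv => h ⟨m, n, hv⟩
      have : ∃ k, m < k ∧ k < n ∧ ¬ Triv (d k) ∧ ¬ OnCap C k := by
        by_contra hno
        push_neg at hno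
        exact hnv ⟨hmn, hdm, hdn, hcm, hcn, fun k h1 h2 => by
          by_cases ht : Triv (d k)
          · exact Or.inl ht
          · exact Or.inr (hno k h1 h2 ht)⟩
      obtain ⟨k, hk1, hk2, hk3, hk4⟩ := this
      rcases not_triv_iff.1 hk3 with hkv | hkw
      · exact ih (n - k).toNat (by omega) k n rfl hk2 hkv hdn hk4 hcn
      · exact ih (k - m).toNat (by omega) m k rfl hk1 hdm hkw hcm hk4
  exact main (n - m).toNat m n rfl hmn hdm hdn hcm hcn

lemma struct_of_isCapDiagram {d : ℤ → Lbl} {C : Set (ℤ × ℤ)}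
    (h : IsCapDiagram d C) : Struct d C := by
  obtain ⟨h1, h2⟩ := h
  obtain ⟨a, b, c⟩ := reach_inv h1
  exact ⟨a, b, c, complete_sorted h2⟩
/-- Endpoints of distinct caps: convenient accessor. -/
lemma endpoint_eq {C : Set (ℤ × ℤ)} (hD : Disj C) {p q : ℤ × ℤ}
    (hp : p ∈ C) (hq : q ∈ C) (h : p.1 = q.1 ∨ p.1 = q.2 ∨ p.2 = q.1 ∨ p.2 = q.2) :
    p = q := by
  by_contra hne
  obtain ⟨h1, h2, h3, h4⟩ := hD p hp q hq hne
  tauto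

/-- Caps are non-crossing. -/
lemma noncross {d : ℤ → Lbl} {C : Set (ℤ × ℤ)} (hC : Caps d C) (hD : Disj C)
    (hN : Nest d C) {p q : ℤ × ℤ} (hp : p ∈ C) (hq : q ∈ C)
    (h1 : p.1 < q.1) (h2 : q.1 < p.2) : p.1 < q.1 ∧ q.1 < p.2 ∧ q.2 < p.2 := by
  refine ⟨h1, h2, ?_⟩
  obtain ⟨r, hr, hr1, hr2, hr3⟩ := hN p hp q.1 h1 h2
    (by rw [(hC q hq).2.1]; exact triv_vee)
  rcases hr3 with h | h
  · have : q = r := endpoint_eq hD hq hr (Or.inl h)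
    rw [this]; exact hr2
  · exfalso
    have := (hC r hr).2.2
    rw [← h, (hC q hq).2.1] at this
    exact Lbl.noConfusion this

/-- Uniqueness auxiliary: a minimal-width cap in the symmetric difference
yields a contradiction. -/
lemma uniq_aux {d : ℤ → Lbl} {C1 C2 : Set (ℤ × ℤ)}
    (h1 : Struct d C1) (h2 : Struct d C2) {p : ℤ × ℤ}
    (hp1 : p ∈ C1) (hp2 : p ∉ C2)
    (hmin : ∀ q : ℤ × ℤ, (q ∈ C1 ∧ q ∉ C2) ∨ (q ∈ C2 ∧ q ∉ C1) →
      (q.2 - q.1).toNat < (p.2 - p.1).toNat → False) : False := by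
  obtain ⟨hC1, hD1, hN1, hS1⟩ := h1
  obtain ⟨hC2, hD2, hN2, hS2⟩ := h2
  obtain ⟨hab, hda, hdb⟩ := hC1 p hp1
  set a := p.1 with ha
  set b := p.2 with hb
  -- first: a is capped in C2
  have hacap : OnCap C2 a := by
    by_contra hna
    have hbcap : OnCap C2 b := by
      by_contra hnb
      exact hS2 a b hab hda hdb hna hnb
    obtain ⟨q, hq, hqb⟩ := hbcap
    -- q ends at b (since d b = wedge it cannot start at b)
    have hqb2 : q.2 = b := by
      rcases hqb with h | h
      · exfalso; have := (hC2 q hq).2.1; rw [h, hdb] at this; exact Lbl.noConfusion this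
      · exact h
    have hqlt : q.1 < b := by have := (hC2 q hq).1; omega
    have hqa : q.1 ≠ a := fun h => hna ⟨q, hq, Or.inl h⟩
    rcases lt_or_gt_of_ne hqa with hlt | hgt
    · -- q.1 < a : a is interior of q in C2, so a is C2-capped: contra
      obtain ⟨r, hr, hr1, hr2, hr3⟩ := hN2 q hq a hlt (by omega)
        (by rw [hda]; exact triv_vee)
      exact hna ⟨r, hr, hr3.imp Eq.symm Eq.symm⟩
    · -- a < q.1 < b : q.1 interior of p in C1, capped inside p by r ∈ C1
      obtain ⟨r, hr, hr1, hr2, hr3⟩ := hN1 p hp1 q.1 hgt (by omega)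
        (by rw [(hC2 q hq).2.1]; exact triv_vee)
      -- r has endpoint q.1, r strictly inside p, so r ≠ q hence r ∉ C2
      have hrq : r ∉ C2 := by
        intro hrC2
        have : r = q := endpoint_eq hD2 hrC2 hq (by tauto)
        rw [this] at hr2; omega
      have hwr : (r.2 - r.1).toNat < (b - a).toNat := by
        have := (hC1 r hr).1; omega
      exact hmin r (Or.inl ⟨hr, hrq⟩) hwr
  obtain ⟨s, hs, hsa⟩ := hacap
  have hsa1 : s.1 = a := by
    rcases hsa with h | h
    · exact h
    · exfalso; have := (hC2 s hs).2.2; rw [h, hda] at this; exact Lbl.noConfusion this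
  have hsab : a < s.2 := by have := (hC2 s hs).1; omega
  rcases lt_trichotomy s.2 b with hlt | heq | hgt
  · -- s = (a, e) with e < b : s ∈ C2 \ C1, smaller width
    have hsC1 : s ∉ C1 := by
      intro hsC1
      have : s = p := endpoint_eq hD1 hsC1 hp1 (Or.inl (by rw [hsa1]))
      rw [this] at hlt; omega
    exact hmin s (Or.inr ⟨hs, hsC1⟩) (by omega)
  · -- s = p contradiction
    apply hp2
    have : s = (a, b) := Prod.ext hsa1 heq
    have hpab : p = (a, b) := rfl
    rw [hpab, ← this]; exact hs
  · -- b interior of s: b capped inside s by t ∈ C2, t = (c, b), a < c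
    obtain ⟨t, ht, ht1, ht2, ht3⟩ := hN2 s hs b (by omega) hgt
      (by rw [hdb]; exact triv_wedge)
    have htb : t.2 = b := by
      rcases ht3 with h | h
      · exfalso; have := (hC2 t ht).2.1; rw [← h, hdb] at this; exact Lbl.noConfusion this
      · exact h.symm
    have htC1 : t ∉ C1 := by
      intro htC1
      have : t = p := endpoint_eq hD1 htC1 hp1 (by rw [htb]; tauto)
      rw [this] at ht1; rw [hsa1] at ht1; omega
    have : (t.2 - t.1).toNat < (b - a).toNat := by
      have := (hC2 t ht).1; rw [hsa1] at ht1; omega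
    exact hmin t (Or.inr ⟨ht, htC1⟩) this

/-- Uniqueness of completed cap diagrams. -/
lemma struct_unique {d : ℤ → Lbl} {C1 C2 : Set (ℤ × ℤ)}
    (h1 : Struct d C1) (h2 : Struct d C2) : C1 = C2 := by
  by_contra hne
  have hkey : ∀ g : ℕ, ∀ q : ℤ × ℤ,
      ((q ∈ C1 ∧ q ∉ C2) ∨ (q ∈ C2 ∧ q ∉ C1)) → (q.2 - q.1).toNat = g → False := by
    intro g
    induction g using Nat.strong_induction_on with
    | _ g ih =>
      rintro q (⟨hq1, hq2⟩ | ⟨hq1, hq2⟩) hg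
      · exact uniq_aux h1 h2 hq1 hq2 (fun r hr hw => ih _ (hg ▸ hw) r hr rfl)
      · exact uniq_aux h2 h1 hq1 hq2 (fun r hr hw => ih _ (hg ▸ hw) r (hr.symm) rfl)
  apply hne
  ext q
  constructor
  · intro hq
    by_contra hq2
    exact hkey _ q (Or.inl ⟨hq, hq2⟩) rfl
  · intro hq
    by_contra hq2
    exact hkey _ q (Or.inr ⟨hq, hq2⟩) rfl
section SB
variable {dp dm dmup dmum : ℤ → Lbl} {i : ℤ}

/-- Transfer of `SameBlock` across the wall swaps. -/
lemma sameBlock_transfer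
    (hp : dp (i - 1) = Lbl.vee ∧ dp i = Lbl.wedge)
    (hm : dm (i - 1) = Lbl.wedge ∧ dm i = Lbl.vee ∧
      ∀ n, n ≠ i - 1 → n ≠ i → dm n = dp n)
    (hblock : SameBlock dp dmup)
    (hmup : dmup (i - 1) = Lbl.vee ∧ dmup i = Lbl.wedge)
    (hmum : dmum (i - 1) = Lbl.wedge ∧ dmum i = Lbl.vee ∧
      ∀ n, n ≠ i - 1 → n ≠ i → dmum n = dmup n) :
    SameBlock dp dmum ∧ SameBlock dm dmup ∧ SameBlock dm dmum := by
  obtain ⟨ht1, ht2, hfin, hcnt⟩ := hblock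
  set S1 := {n | dp n = Lbl.wedge ∧ dmup n = Lbl.vee} with hS1
  set S2 := {n | dp n = Lbl.vee ∧ dmup n = Lbl.wedge} with hS2
  have hS1fin : S1.Finite := hfin.subset (fun n hn => by
    simp only [hS1, Set.mem_setOf_eq] at hn
    simp only [Set.mem_setOf_eq]
    rw [hn.1, hn.2]; exact fun h => Lbl.noConfusion h)
  have hS2fin : S2.Finite := hfin.subset (fun n hn => by
    simp only [hS2, Set.mem_setOf_eq] at hn
    simp only [Set.mem_setOf_eq]
    rw [hn.1, hn.2]; exact fun h => Lbl.noConfusion h)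
  have hi1S1 : (i-1) ∉ S1 := by simp [hS1, hp.1]
  have hiS1 : i ∉ S1 := by simp [hS1, hmup.2]
  have hi1S2 : (i-1) ∉ S2 := by simp [hS2, hmup.1]
  have hiS2 : i ∉ S2 := by simp [hS2, hp.2]
  have hne : i - 1 ≠ i := by omega
  have e1 : {n | dp n = Lbl.wedge ∧ dmum n = Lbl.vee} = insert i S1 := by
    ext n
    rw [Set.mem_setOf_eq, Set.mem_insert_iff]
    by_cases h1 : n = i - 1
    · rw [h1]; simp [hp.1, hne, hi1S1]
    · by_cases h2 : n = i
      · rw [h2]; simp [hp.2, hmum.2.1]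
      · rw [hmum.2.2 n h1 h2]; simp [hS1, Set.mem_setOf_eq, h2]
  have e2 : {n | dp n = Lbl.vee ∧ dmum n = Lbl.wedge} = insert (i-1) S2 := by
    ext n
    rw [Set.mem_setOf_eq, Set.mem_insert_iff]
    by_cases h1 : n = i - 1
    · rw [h1]; simp [hp.1, hmum.1]
    · by_cases h2 : n = i
      · rw [h2]; simp [hp.2, hne.symm, h1, hiS2, h2]
      · rw [hmum.2.2 n h1 h2]; simp [hS2, Set.mem_setOf_eq, h1]
  have e3 : {n | dm n = Lbl.wedge ∧ dmup n = Lbl.vee} = insert (i-1) S1 := by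
    ext n
    rw [Set.mem_setOf_eq, Set.mem_insert_iff]
    by_cases h1 : n = i - 1
    · rw [h1]; simp [hm.1, hmup.1]
    · by_cases h2 : n = i
      · rw [h2]; simp [hm.2.1, hne.symm, hiS1, h1, h2]
      · rw [hm.2.2 n h1 h2]; simp [hS1, Set.mem_setOf_eq, h1]
  have e4 : {n | dm n = Lbl.vee ∧ dmup n = Lbl.wedge} = insert i S2 := by
    ext n
    rw [Set.mem_setOf_eq, Set.mem_insert_iff]
    by_cases h1 : n = i - 1
    · rw [h1]; simp [hm.1, hne, hi1S2]
    · by_cases h2 : n = i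
      · rw [h2]; simp [hm.2.1, hmup.2]
      · rw [hm.2.2 n h1 h2]; simp [hS2, Set.mem_setOf_eq, h2]
  have e5 : {n | dm n = Lbl.wedge ∧ dmum n = Lbl.vee} = S1 := by
    ext n
    rw [Set.mem_setOf_eq]
    by_cases h1 : n = i - 1
    · rw [h1]; simp [hmum.1, hi1S1]
    · by_cases h2 : n = i
      · rw [h2]; simp [hm.2.1, hiS1]
      · rw [hm.2.2 n h1 h2, hmum.2.2 n h1 h2]; simp [hS1, Set.mem_setOf_eq]
  have e6 : {n | dm n = Lbl.vee ∧ dmum n = Lbl.wedge} = S2 := by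
    ext n
    rw [Set.mem_setOf_eq]
    by_cases h1 : n = i - 1
    · rw [h1]; simp [hm.1, hi1S2]
    · by_cases h2 : n = i
      · rw [h2]; simp [hmum.2.1, hiS2]
      · rw [hm.2.2 n h1 h2, hmum.2.2 n h1 h2]; simp [hS2, Set.mem_setOf_eq]
  have hc1 : (insert i S1).ncard = (insert (i-1) S2).ncard := by
    rw [Set.ncard_insert_of_notMem hiS1 hS1fin,
        Set.ncard_insert_of_notMem hi1S2 hS2fin, hcnt]
  have hc2 : (insert (i-1) S1).ncard = (insert i S2).ncard := by
    rw [Set.ncard_insert_of_notMem hi1S1 hS1fin,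
        Set.ncard_insert_of_notMem hiS2 hS2fin, hcnt]
  have hsub : ∀ u v : ℤ → Lbl, (∀ n, n ≠ i-1 → n ≠ i → (u n ≠ v n → dp n ≠ dmup n)) →
      {n | u n ≠ v n}.Finite := by
    intro u v h
    apply (hfin.union ((Set.finite_singleton i).insert (i-1))).subset
    intro n hn
    rw [Set.mem_setOf_eq] at hn
    by_cases h1 : n = i - 1
    · exact Set.mem_union_right _ (by rw [h1]; exact Set.mem_insert _ _)
    · by_cases h2 : n = i
      · exact Set.mem_union_right _ (by rw [h2]; right; rfl)
      · exact Set.mem_union_left _ (h n h1 h2 hn)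
  have hfin2 : {n | dp n ≠ dmum n}.Finite :=
    hsub dp dmum (fun n h1 h2 hn => by rwa [hmum.2.2 n h1 h2] at hn)
  have hfin3 : {n | dm n ≠ dmup n}.Finite :=
    hsub dm dmup (fun n h1 h2 hn => by rwa [hm.2.2 n h1 h2] at hn)
  have hfin4 : {n | dm n ≠ dmum n}.Finite :=
    hsub dm dmum (fun n h1 h2 hn => by rwa [hm.2.2 n h1 h2, hmum.2.2 n h1 h2] at hn)
  have trivLemma : ∀ (u v : ℤ → Lbl),
      (∀ n, n ≠ i-1 → n ≠ i → (Triv (u n) → v n = u n) ) →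
      (u (i-1) = Lbl.vee ∨ u (i-1) = Lbl.wedge) →
      (u i = Lbl.vee ∨ u i = Lbl.wedge) →
      ∀ n, Triv (u n) → v n = u n := by
    intro u v h hw1 hw2 n ht
    by_cases h1 : n = i - 1
    · rw [h1] at ht; rcases hw1 with h' | h' <;> rw [h'] at ht <;>
        [exact absurd ht triv_vee; exact absurd ht triv_wedge]
    · by_cases h2 : n = i
      · rw [h2] at ht; rcases hw2 with h' | h' <;> rw [h'] at ht <;>
          [exact absurd ht triv_vee; exact absurd ht triv_wedge]
      · exact h n h1 h2 ht
  refine ⟨⟨?_, ?_, hfin2, by rw [e1, e2]; exact hc1⟩,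
          ⟨?_, ?_, hfin3, by rw [e3, e4]; exact hc2⟩,
          ⟨?_, ?_, hfin4, by rw [e5, e6]; exact hcnt⟩⟩
  · exact trivLemma dp dmum (fun n h1 h2 ht => by rw [hmum.2.2 n h1 h2, ht1 n ht])
      (Or.inl hp.1) (Or.inr hp.2)
  · exact trivLemma dmum dp (fun n h1 h2 ht => by
      rw [hmum.2.2 n h1 h2] at ht ⊢; exact ht2 n ht)
      (Or.inr hmum.1) (Or.inl hmum.2.1)
  · exact trivLemma dm dmup (fun n h1 h2 ht => by rw [hm.2.2 n h1 h2] at ht ⊢; exact ht1 n ht)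
      (Or.inr hm.1) (Or.inl hm.2.1)
  · exact trivLemma dmup dm (fun n h1 h2 ht => by
      rw [hm.2.2 n h1 h2]; exact ht2 n ht) (Or.inl hmup.1) (Or.inr hmup.2)
  · exact trivLemma dm dmum (fun n h1 h2 ht => by
      rw [hm.2.2 n h1 h2] at ht; rw [hmum.2.2 n h1 h2, hm.2.2 n h1 h2, ht1 n ht])
      (Or.inr hm.1) (Or.inl hm.2.1)
  · exact trivLemma dmum dm (fun n h1 h2 ht => by
      rw [hmum.2.2 n h1 h2] at ht; rw [hm.2.2 n h1 h2, hmum.2.2 n h1 h2, ht2 n ht])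
      (Or.inr hmum.1) (Or.inl hmum.2.1)
end SB
lemma dPol_pos {d : ℤ → Lbl} {C : Set (ℤ × ℤ)} {x : ℤ → Lbl}
    (hb : SameBlock d x) (ho : Oriented d C x) :
    dPol d C x = LaurentPolynomial.T (clockCount C x) := by
  rw [dPol, if_pos ⟨hb, ho⟩]

lemma dPol_neg {d : ℤ → Lbl} {C : Set (ℤ × ℤ)} {x : ℤ → Lbl}
    (ho : ¬ Oriented d C x) : dPol d C x = 0 := by
  rw [dPol, if_neg (fun h => ho h.2)]

/-- Final assembly: the seven combinatorial facts give the two identities. -/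
lemma assemble {dp dm : ℤ → Lbl} {Cp Cm : Set (ℤ × ℤ)} {dmup dmum : ℤ → Lbl}
    (hb1 : SameBlock dp dmup) (hb2 : SameBlock dp dmum)
    (hb3 : SameBlock dm dmup) (hb4 : SameBlock dm dmum)
    (hA : ¬ (Oriented dm Cm dmup ∧ Oriented dm Cm dmum))
    (hB1 : Oriented dm Cm dmup →
      Oriented dp Cp dmup ∧ clockCount Cp dmup + 1 = clockCount Cm dmup)
    (hB2 : Oriented dm Cm dmum →
      Oriented dp Cp dmup ∧ clockCount Cp dmup = clockCount Cm dmum)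
    (hB3 : Oriented dp Cp dmup → Oriented dm Cm dmup ∨ Oriented dm Cm dmum)
    (hC1 : Oriented dm Cm dmum →
      Oriented dp Cp dmum ∧ clockCount Cp dmum = clockCount Cm dmum + 1)
    (hC2 : Oriented dm Cm dmup →
      Oriented dp Cp dmum ∧ clockCount Cp dmum = clockCount Cm dmup)
    (hC3 : Oriented dp Cp dmum → Oriented dm Cm dmup ∨ Oriented dm Cm dmum) :
    (dPol dp Cp dmup =
      LaurentPolynomial.T (-1) * dPol dm Cm dmup + dPol dm Cm dmum ∧
    dPol dp Cp dmum =
      LaurentPolynomial.T 1 * dPol dm Cm dmum + dPol dm Cm dmup) := by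
  classical
  by_cases h1 : Oriented dm Cm dmup
  · have h2 : ¬ Oriented dm Cm dmum := fun h2 => hA ⟨h1, h2⟩
    obtain ⟨hop, hcnt⟩ := hB1 h1
    obtain ⟨hom, hcnt2⟩ := hC2 h1
    rw [dPol_pos hb3 h1, dPol_neg h2, dPol_pos hb1 hop, dPol_pos hb2 hom]
    constructor
    · rw [add_zero, ← LaurentPolynomial.T_add]
      congr 1
      have : (clockCount Cp dmup : ℤ) + 1 = clockCount Cm dmup := by exact_mod_cast hcnt
      omega
    · rw [hcnt2]
      simp
  · by_cases h2 : Oriented dm Cm dmum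
    · obtain ⟨hop, hcnt⟩ := hB2 h2
      obtain ⟨hom, hcnt2⟩ := hC1 h2
      rw [dPol_neg h1, dPol_pos hb4 h2, dPol_pos hb1 hop, dPol_pos hb2 hom]
      constructor
      · rw [mul_zero, zero_add, hcnt]
      · rw [add_zero, ← LaurentPolynomial.T_add]
        congr 1
        have : (clockCount Cp dmum : ℤ) = (clockCount Cm dmum : ℤ) + 1 := by
          exact_mod_cast hcnt2
        omega
    · have hnp : ¬ Oriented dp Cp dmup := fun h => by rcases hB3 h with h | h <;> tauto
      have hnm : ¬ Oriented dp Cp dmum := fun h => by rcases hC3 h with h | h <;> tauto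
      rw [dPol_neg h1, dPol_neg h2, dPol_neg hnp, dPol_neg hnm]
      simp
/-- Conditions 1, 3, 4 of `Oriented` (everything except the cap condition). -/
def Cond134 (d : ℤ → Lbl) (C : Set (ℤ × ℤ)) (x : ℤ → Lbl) : Prop :=
  (∀ n, ¬ OnCap C n → Triv (d n) → Triv (x n)) ∧
  (∀ n, ¬ OnCap C n → ¬ Triv (d n) → (x n = Lbl.vee ∨ x n = Lbl.wedge)) ∧
  (∀ m n : ℤ, m < n → ¬ OnCap C m → ¬ OnCap C n → ¬ Triv (d m) → ¬ Triv (d n) →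
    ¬ (x m = Lbl.vee ∧ x n = Lbl.wedge))

lemma oriented_iff {d : ℤ → Lbl} {C : Set (ℤ × ℤ)} {x : ℤ → Lbl} :
    Oriented d C x ↔
      ((∀ p ∈ C, (x p.1 = Lbl.vee ∧ x p.2 = Lbl.wedge) ∨
            (x p.1 = Lbl.wedge ∧ x p.2 = Lbl.vee)) ∧ Cond134 d C x) := by
  constructor
  · rintro ⟨h1, h2, h3, h4⟩; exact ⟨h2, h1, h3, h4⟩
  · rintro ⟨h2, h1, h3, h4⟩; exact ⟨h1, h2, h3, h4⟩

/-- Congruence for `Cond134` when the capped sets and labels agree. -/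
lemma cond134_congr {d1 d2 : ℤ → Lbl} {C1 C2 : Set (ℤ × ℤ)} {x1 x2 : ℤ → Lbl}
    (h : ∀ n, ¬ OnCap C2 n →
      (¬ OnCap C1 n) ∧ (Triv (d1 n) ↔ Triv (d2 n)) ∧ x1 n = x2 n) :
    Cond134 d1 C1 x1 → Cond134 d2 C2 x2 := by
  rintro ⟨c1, c3, c4⟩
  refine ⟨?_, ?_, ?_⟩
  · intro n hn ht
    obtain ⟨hh1, hh2, hh3⟩ := h n hn
    rw [← hh3]; exact c1 n hh1 (hh2.2 ht)
  · intro n hn ht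
    obtain ⟨hh1, hh2, hh3⟩ := h n hn
    rw [← hh3]; exact c3 n hh1 (fun t => ht (hh2.1 t))
  · intro m n hmn hm hn htm htn
    obtain ⟨hm1, hm2, hm3⟩ := h m hm
    obtain ⟨hn1, hn2, hn3⟩ := h n hn
    rw [← hm3, ← hn3]
    exact c4 m n hmn hm1 hn1 (fun t => htm (hm2.1 t)) (fun t => htn (hn2.1 t))

/-- Transfer of `Cond134` when one ray is relocated from `r1` to `r2`
with the same orientation label. -/
lemma cond134_transfer {d1 d2 : ℤ → Lbl} {C1 C2 : Set (ℤ × ℤ)} {x1 x2 : ℤ → Lbl}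
    {r1 r2 : ℤ}
    (hoff : ∀ n, n ≠ r1 → n ≠ r2 → ¬ OnCap C2 n →
      (¬ OnCap C1 n) ∧ (Triv (d1 n) ↔ Triv (d2 n)) ∧ x1 n = x2 n)
    (hr1 : ¬ OnCap C1 r1) (hr1t : ¬ Triv (d1 r1))
    (hr1c : r1 = r2 ∨ OnCap C2 r1)
    (hr2 : ¬ Triv (d2 r2))
    (hx : x1 r1 = x2 r2)
    (hbet : ∀ k, min r1 r2 < k → k < max r1 r2 → OnCap C2 k ∨ Triv (d2 k)) :
    Cond134 d1 C1 x1 → Cond134 d2 C2 x2 := by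
  rintro ⟨c1, c3, c4⟩
  have hnr1 : ∀ n, ¬ OnCap C2 n → n ≠ r2 → n ≠ r1 := by
    intro n hn h2 h1
    rcases hr1c with h | h
    · exact h2 (h1.trans h)
    · rw [h1] at hn; exact hn h
  refine ⟨?_, ?_, ?_⟩
  · intro n hn ht
    by_cases h2 : n = r2
    · rw [h2] at ht; exact absurd ht hr2
    · obtain ⟨hh1, hh2, hh3⟩ := hoff n (hnr1 n hn h2) h2 hn
      rw [← hh3]; exact c1 n hh1 (hh2.2 ht)
  · intro n hn ht
    by_cases h2 : n = r2
    · rw [h2, ← hx]; exact c3 r1 hr1 hr1t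
    · obtain ⟨hh1, hh2, hh3⟩ := hoff n (hnr1 n hn h2) h2 hn
      rw [← hh3]; exact c3 n hh1 (fun t => ht (hh2.1 t))
  · intro m n hmn hm hn htm htn hcontra
    by_cases hm2 : m = r2
    · -- m = r2 : x2 r2 = vee, pair (r1, n) in system 1
      by_cases hn2 : n = r2
      · omega
      · obtain ⟨hh1, hh2, hh3⟩ := hoff n (hnr1 n hn hn2) hn2 hn
        have hnr : r1 < n := by
          by_contra hle
          push_neg at hle
          have h1 : n ≠ r1 := hnr1 n hn hn2
          have : min r1 r2 < n ∧ n < max r1 r2 := by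
            constructor <;> omega
          rcases hbet n this.1 this.2 with h | h
          · exact hn h
          · exact htn h
        refine c4 r1 n hnr hr1 hh1 hr1t (fun t => htn (hh2.1 t)) ⟨?_, ?_⟩
        · rw [hx, ← hm2]; exact hcontra.1
        · rw [hh3]; exact hcontra.2
    · by_cases hn2 : n = r2
      · obtain ⟨hh1, hh2, hh3⟩ := hoff m (hnr1 m hm hm2) hm2 hm
        have hmr : m < r1 := by
          by_contra hle
          push_neg at hle
          have h1 : m ≠ r1 := hnr1 m hm hm2
          have : min r1 r2 < m ∧ m < max r1 r2 := by
            constructor <;> omega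
          rcases hbet m this.1 this.2 with h | h
          · exact hm h
          · exact htm h
        refine c4 m r1 hmr hh1 hr1 (fun t => htm (hh2.1 t)) hr1t ⟨?_, ?_⟩
        · rw [hh3]; exact hcontra.1
        · rw [hx, ← hn2]; exact hcontra.2
      · obtain ⟨hm1, hm2', hm3⟩ := hoff m (hnr1 m hm hm2) hm2 hm
        obtain ⟨hn1, hn2', hn3⟩ := hoff n (hnr1 n hn hn2) hn2 hn
        exact c4 m n hmn hm1 hn1 (fun t => htm (hm2'.1 t)) (fun t => htn (hn2'.1 t))
          ⟨by rw [hm3]; exact hcontra.1, by rw [hn3]; exact hcontra.2⟩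

/-- The cap configuration of a bounded diagram is finite. -/
lemma caps_finite {d : ℤ → Lbl} {C : Set (ℤ × ℤ)} (hb : Bdd d)
    (hC : Caps d C) (hD : Disj C) : C.Finite := by
  obtain ⟨N, hN1, hN2⟩ := hb
  have himg : (Prod.fst '' C) ⊆ Set.Ioo (-N) N := by
    rintro m ⟨p, hp, rfl⟩
    obtain ⟨h1, h2, h3⟩ := hC p hp
    constructor
    · by_contra h
      push_neg at h
      rw [hN1 p.1 h] at h2; exact Lbl.noConfusion h2
    · by_contra h
      push_neg at h
      have : N ≤ p.2 := by omega
      rw [hN2 p.2 this] at h3; exact Lbl.noConfusion h3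
  have hinj : Set.InjOn Prod.fst C := by
    intro p hp q hq h
    by_contra hne
    exact (hD p hp q hq hne).1 h
  exact Set.Finite.of_finite_image ((Set.finite_Ioo _ _).subset himg) hinj

lemma sep_insert_pos {C : Set (ℤ × ℤ)} {P : ℤ × ℤ → Prop} {q : ℤ × ℤ} (hq : P q) :
    {p ∈ insert q C | P p} = insert q {p ∈ C | P p} := by
  ext p
  simp only [Set.mem_setOf_eq, Set.mem_insert_iff]
  constructor
  · rintro ⟨rfl | h, hP⟩
    · exact Or.inl rfl
    · exact Or.inr ⟨h, hP⟩
  · rintro (rfl | ⟨h, hP⟩)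
    · exact ⟨Or.inl rfl, hq⟩
    · exact ⟨Or.inr h, hP⟩

lemma sep_insert_neg {C : Set (ℤ × ℤ)} {P : ℤ × ℤ → Prop} {q : ℤ × ℤ} (hq : ¬ P q) :
    {p ∈ insert q C | P p} = {p ∈ C | P p} := by
  ext p
  simp only [Set.mem_setOf_eq, Set.mem_insert_iff]
  constructor
  · rintro ⟨rfl | h, hP⟩
    · exact absurd hP hq
    · exact ⟨h, hP⟩
  · rintro ⟨h, hP⟩
    exact ⟨Or.inr h, hP⟩
/-- The six case facts that drive the recursion. -/
def Facts (dp dm : ℤ → Lbl) (Cp Cm : Set (ℤ × ℤ)) (dmup dmum : ℤ → Lbl) : Prop :=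
  (Oriented dm Cm dmup →
    Oriented dp Cp dmup ∧ clockCount Cp dmup + 1 = clockCount Cm dmup) ∧
  (Oriented dm Cm dmum →
    Oriented dp Cp dmup ∧ clockCount Cp dmup = clockCount Cm dmum) ∧
  (Oriented dp Cp dmup → Oriented dm Cm dmup ∨ Oriented dm Cm dmum) ∧
  (Oriented dm Cm dmum →
    Oriented dp Cp dmum ∧ clockCount Cp dmum = clockCount Cm dmum + 1) ∧
  (Oriented dm Cm dmup →
    Oriented dp Cp dmum ∧ clockCount Cp dmum = clockCount Cm dmup) ∧
  (Oriented dp Cp dmum → Oriented dm Cm dmup ∨ Oriented dm Cm dmum)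

section Helpers
variable {dp : ℤ → Lbl} {i : ℤ} {Cp : Set (ℤ × ℤ)}

lemma shared_endpoints (SpD : Disj Cp) (hcap : (i-1, i) ∈ Cp) :
    ∀ p ∈ Cp, p ≠ (i-1, i) → p.1 ≠ i-1 ∧ p.1 ≠ i ∧ p.2 ≠ i-1 ∧ p.2 ≠ i := by
  intro p hp hne
  obtain ⟨h1, h2, h3, h4⟩ := SpD p hp (i-1, i) hcap hne
  exact ⟨h1, h2, h3, h4⟩

lemma onCap_diff_small (SpD : Disj Cp) (hcap : (i-1, i) ∈ Cp) :
    ∀ n, OnCap (Cp \ {(i-1, i)}) n ↔ (OnCap Cp n ∧ n ≠ i-1 ∧ n ≠ i) := by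
  intro n
  constructor
  · rintro ⟨p, ⟨hp, hps⟩, hn⟩
    rw [Set.mem_singleton_iff] at hps
    obtain ⟨e1, e2, e3, e4⟩ := shared_endpoints SpD hcap p hp hps
    refine ⟨⟨p, hp, hn⟩, ?_, ?_⟩ <;> rcases hn with h | h <;> omega
  · rintro ⟨⟨p, hp, hn⟩, h1, h2⟩
    refine ⟨p, ⟨hp, ?_⟩, hn⟩
    rw [Set.mem_singleton_iff]
    rintro rfl
    simp only at hn
    rcases hn with h | h <;> omega

lemma wall_interior (hp1 : dp (i-1) = Lbl.vee) (hp2 : dp i = Lbl.wedge)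
    (SpD : Disj Cp) (SpN : Nest dp Cp) (hcap : (i-1, i) ∈ Cp) :
    ∀ p ∈ Cp, ∀ k, (k = i-1 ∨ k = i) → p.1 < k → k < p.2 →
      p.1 < i-1 ∧ i < p.2 := by
  intro p hp k hk h1 h2
  have hnt : ¬ Triv (dp k) := by
    rcases hk with rfl | rfl
    · rw [hp1]; exact triv_vee
    · rw [hp2]; exact triv_wedge
  obtain ⟨q, hq, hq1, hq2, hkq⟩ := SpN p hp k h1 h2 hnt
  have : q = (i-1, i) := by
    apply endpoint_eq SpD hq hcap
    simp only
    rcases hk with rfl | rfl <;> rcases hkq with h | h <;> omega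
  rw [this] at hq1 hq2
  simp only at hq1 hq2
  omega

/-- If no cap contains the small cap, all other caps lie strictly to one side. -/
lemma no_contain_side (hnN : ¬ ∃ q ∈ Cp, q.1 < i-1 ∧ i < q.2)
    (SpC : Caps dp Cp) (SpD : Disj Cp) (hcap : (i-1, i) ∈ Cp) :
    ∀ p ∈ Cp, p ≠ (i-1, i) → p.2 < i-1 ∨ i < p.1 := by
  intro p hp hne
  obtain ⟨e1, e2, e3, e4⟩ := shared_endpoints SpD hcap p hp hne
  have hlt := (SpC p hp).1
  by_contra h
  push_neg at h
  exact hnN ⟨p, hp, by omega, by omega⟩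

end Helpers
open Classical in
/-- The counting argument: in the totally separated case, an oriented labelling
has no `∨`-ray left of the wall and no `∧`-ray right of the wall. -/
lemma count_balance {dp : ℤ → Lbl} {i : ℤ} {Cp : Set (ℤ × ℤ)}
    (SpC : Caps dp Cp) (SpD : Disj Cp)
    (hcap : (i-1, i) ∈ Cp)
    (hnL : ¬ ∃ a, a < i-1 ∧ dp a = Lbl.vee ∧ ¬ OnCap Cp a)
    (hnR : ¬ ∃ b, i < b ∧ dp b = Lbl.wedge ∧ ¬ OnCap Cp b)
    {x : ℤ → Lbl} (hbx : SameBlock dp x) (hO : Oriented dp Cp x) :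
    (∀ m, ¬ OnCap Cp m → ¬ Triv (dp m) → m < i - 1 → x m = Lbl.wedge) ∧
    (∀ n, ¬ OnCap Cp n → ¬ Triv (dp n) → i < n → x n = Lbl.vee) := by
  obtain ⟨o1, o2, o3, o4⟩ := hO
  obtain ⟨hb1, hb2, hbfin, hbcnt⟩ := hbx
  set W1 := {n | dp n = Lbl.wedge ∧ x n = Lbl.vee} with hW1
  set W2 := {n | dp n = Lbl.vee ∧ x n = Lbl.wedge} with hW2
  have hW1fin : W1.Finite := hbfin.subset (fun n hn => by
    simp only [hW1, Set.mem_setOf_eq] at hn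
    simp only [Set.mem_setOf_eq]
    rw [hn.1, hn.2]; exact fun h => Lbl.noConfusion h)
  have hW2fin : W2.Finite := hbfin.subset (fun n hn => by
    simp only [hW2, Set.mem_setOf_eq] at hn
    simp only [Set.mem_setOf_eq]
    rw [hn.1, hn.2]; exact fun h => Lbl.noConfusion h)
  set RU := {n | n ∈ W1 ∧ ¬ OnCap Cp n} with hRU
  set CU := {n | n ∈ W1 ∧ OnCap Cp n} with hCU
  set RD := {n | n ∈ W2 ∧ ¬ OnCap Cp n} with hRD
  set CD := {n | n ∈ W2 ∧ OnCap Cp n} with hCD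
  -- the partner map
  set f : ℤ → ℤ := fun n => if h : ∃ p ∈ Cp, p.2 = n then h.choose.1 else n with hf
  have hfspec : ∀ n, (∃ p ∈ Cp, p.2 = n) → ∃ p ∈ Cp, p.2 = n ∧ f n = p.1 := by
    intro n h
    refine ⟨h.choose, h.choose_spec.1, h.choose_spec.2, ?_⟩
    rw [hf]; simp only [dif_pos h]
  have hCUmap : ∀ n ∈ CU, f n ∈ CD ∧ ∃ p ∈ Cp, p.1 = f n ∧ p.2 = n := by
    intro n hn
    obtain ⟨⟨hdw, hxv⟩, p, hp, hpe⟩ := hn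
    have hpe2 : p.2 = n := by
      rcases hpe with h | h
      · exfalso; have := (SpC p hp).2.1; rw [h, hdw] at this; exact Lbl.noConfusion this
      · exact h
    obtain ⟨q, hq, hq2, hqf⟩ := hfspec n ⟨p, hp, hpe2⟩
    have hqp : q = p := endpoint_eq SpD hq hp (by omega)
    rw [hqp] at hqf hq2 hq
    have hcap2 := o2 p hp
    rw [hpe2, hxv] at hcap2
    have hx1 : x p.1 = Lbl.wedge := by
      rcases hcap2 with ⟨h, h'⟩ | ⟨h, h'⟩
      · exact absurd h' (fun t => Lbl.noConfusion t)
      · exact h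
    refine ⟨⟨⟨?_, ?_⟩, ?_⟩, p, hp, hqf.symm, hpe2⟩
    · rw [hqf]; exact (SpC p hp).2.1
    · rw [hqf]; exact hx1
    · rw [hqf]; exact ⟨p, hp, Or.inl rfl⟩
  have hCUinj : Set.InjOn f CU := by
    intro n1 h1 n2 h2 he
    obtain ⟨_, p1, hp1, hp1f, hp1e⟩ := hCUmap n1 h1
    obtain ⟨_, p2, hp2, hp2f, hp2e⟩ := hCUmap n2 h2
    have : p1 = p2 := endpoint_eq SpD hp1 hp2 (by rw [hp1f, hp2f, he]; tauto)
    rw [← hp1e, ← hp2e, this]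
  have hCUimg : f '' CU = CD := by
    apply Set.Subset.antisymm
    · rintro m ⟨n, hn, rfl⟩
      exact (hCUmap n hn).1
    · rintro m ⟨⟨hdv, hxw⟩, p, hp, hpe⟩
      have hpe1 : p.1 = m := by
        rcases hpe with h | h
        · exact h
        · exfalso; have := (SpC p hp).2.2; rw [h, hdv] at this; exact Lbl.noConfusion this
      refine ⟨p.2, ?_, ?_⟩
      · -- p.2 ∈ CU
        have hcap2 := o2 p hp
        rw [hpe1, hxw] at hcap2
        have hx2 : x p.2 = Lbl.vee := by
          rcases hcap2 with ⟨h, h'⟩ | ⟨h, h'⟩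
          · exact absurd h (fun t => Lbl.noConfusion t)
          · exact h'
        exact ⟨⟨(SpC p hp).2.2, hx2⟩, p, hp, Or.inr rfl⟩
      · obtain ⟨q, hq, hq2, hqf⟩ := hfspec p.2 ⟨p, hp, rfl⟩
        have : q = p := endpoint_eq SpD hq hp (by omega)
        rw [hqf, this, hpe1]
  have hsplit1 : W1 = RU ∪ CU := by
    ext n; by_cases h : OnCap Cp n <;> simp [hW1, hRU, hCU, h, Set.mem_setOf_eq]
  have hsplit2 : W2 = RD ∪ CD := by
    ext n; by_cases h : OnCap Cp n <;> simp [hW2, hRD, hCD, h, Set.mem_setOf_eq]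
  have hRUfin : RU.Finite := hW1fin.subset (fun n hn => hn.1)
  have hCUfin : CU.Finite := hW1fin.subset (fun n hn => hn.1)
  have hRDfin : RD.Finite := hW2fin.subset (fun n hn => hn.1)
  have hCDfin : CD.Finite := hW2fin.subset (fun n hn => hn.1)
  have hd1 : Disjoint RU CU := by
    rw [Set.disjoint_left]; rintro n ⟨_, h⟩ ⟨_, h'⟩; exact h h'
  have hd2 : Disjoint RD CD := by
    rw [Set.disjoint_left]; rintro n ⟨_, h⟩ ⟨_, h'⟩; exact h h'
  have hcnt1 : W1.ncard = RU.ncard + CU.ncard := by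
    rw [hsplit1, Set.ncard_union_eq hd1 hRUfin hCUfin]
  have hcnt2 : W2.ncard = RD.ncard + CD.ncard := by
    rw [hsplit2, Set.ncard_union_eq hd2 hRDfin hCDfin]
  have hCC : CU.ncard = CD.ncard := by
    rw [← hCUimg, Set.ncard_image_of_injOn hCUinj]
  have hRR : RU.ncard = RD.ncard := by omega
  -- positions of points in RU and RD
  have hRUpos : ∀ m ∈ RU, m < i - 1 := by
    rintro m ⟨⟨hdw, _⟩, hnc⟩
    have h1 : ¬ (i < m) := fun h => hnR ⟨m, h, hdw, hnc⟩
    have h2 : m ≠ i - 1 := fun he => hnc ⟨(i-1, i), hcap, Or.inl he.symm⟩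
    have h3 : m ≠ i := fun he => hnc ⟨(i-1, i), hcap, Or.inr he.symm⟩
    omega
  have hRDpos : ∀ n ∈ RD, i < n := by
    rintro n ⟨⟨hdv, _⟩, hnc⟩
    have h1 : ¬ (n < i - 1) := fun h => hnL ⟨n, h, hdv, hnc⟩
    have h2 : n ≠ i - 1 := fun he => hnc ⟨(i-1, i), hcap, Or.inl he.symm⟩
    have h3 : n ≠ i := fun he => hnc ⟨(i-1, i), hcap, Or.inr he.symm⟩
    omega
  have hRUempty : RU = ∅ := by
    by_contra h
    obtain ⟨m, hm⟩ := Set.nonempty_iff_ne_empty.2 h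
    have hRDne : RD.Nonempty := by
      rw [← Set.ncard_pos hRDfin, ← hRR]
      exact (Set.ncard_pos hRUfin).2 ⟨m, hm⟩
    obtain ⟨n, hn⟩ := hRDne
    have hmn : m < n := by
      have t1 := hRUpos m hm
      have t2 := hRDpos n hn
      omega
    exact o4 m n hmn hm.2 hn.2
      (by rw [hm.1.1]; exact triv_wedge) (by rw [hn.1.1]; exact triv_vee)
      ⟨hm.1.2, hn.1.2⟩
  have hRDempty : RD = ∅ := by
    rw [← Set.ncard_eq_zero hRDfin, ← hRR, Set.ncard_eq_zero hRUfin, hRUempty]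
  constructor
  · intro m hnc hnt hmi
    rcases o3 m hnc hnt with h | h
    · exfalso
      have hdm : dp m = Lbl.wedge := by
        rcases not_triv_iff.1 hnt with h' | h'
        · exact absurd ⟨m, hmi, h', hnc⟩ hnL
        · exact h'
      have : m ∈ RU := ⟨⟨hdm, h⟩, hnc⟩
      rw [hRUempty] at this
      exact this
    · exact h
  · intro n hnc hnt hni
    rcases o3 n hnc hnt with h | h
    · exact h
    · exfalso
      have hdn : dp n = Lbl.vee := by
        rcases not_triv_iff.1 hnt with h' | h'
        · exact h'
        · exact absurd ⟨n, hni, h', hnc⟩ hnR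
      have : n ∈ RD := ⟨⟨hdn, h⟩, hnc⟩
      rw [hRDempty] at this
      exact this
section Case0
variable {dp dm : ℤ → Lbl} {i : ℤ} {Cp : Set (ℤ × ℤ)} {dmup dmum : ℤ → Lbl}

lemma case0
    (hp1 : dp (i-1) = Lbl.vee) (hp2 : dp i = Lbl.wedge)
    (hm1 : dm (i-1) = Lbl.wedge) (hm2 : dm i = Lbl.vee)
    (hmv : ∀ n, n ≠ i-1 → n ≠ i → dm n = dp n)
    (SpC : Caps dp Cp) (SpD : Disj Cp) (SpN : Nest dp Cp) (SpS : Sorted dp Cp)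
    (hcap : (i-1, i) ∈ Cp) (hfin : Cp.Finite)
    (hu1 : dmup (i-1) = Lbl.vee) (hu2 : dmup i = Lbl.wedge)
    (hw1 : dmum (i-1) = Lbl.wedge) (hw2 : dmum i = Lbl.vee)
    (hxv : ∀ n, n ≠ i-1 → n ≠ i → dmum n = dmup n)
    (hbup : SameBlock dp dmup) (hbum : SameBlock dp dmum)
    (hnN : ¬ ∃ q ∈ Cp, q.1 < i-1 ∧ i < q.2)
    (hnL : ¬ ∃ a, a < i-1 ∧ dp a = Lbl.vee ∧ ¬ OnCap Cp a)
    (hnR : ¬ ∃ b, i < b ∧ dp b = Lbl.wedge ∧ ¬ OnCap Cp b) :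
    Struct dm (Cp \ {(i-1, i)}) ∧ Facts dp dm Cp (Cp \ {(i-1, i)}) dmup dmum := by
  set Dm := Cp \ {(i-1, i)} with hDm
  have hocd := onCap_diff_small SpD hcap
  have hsub : Dm ⊆ Cp := Set.diff_subset
  have hmemDm : ∀ p ∈ Dm, p ∈ Cp ∧ p ≠ (i-1, i) := by
    intro p hp; exact ⟨hp.1, by simpa using hp.2⟩
  have hends : ∀ p ∈ Dm, p.1 ≠ i-1 ∧ p.1 ≠ i ∧ p.2 ≠ i-1 ∧ p.2 ≠ i := by
    intro p hp
    obtain ⟨h1, h2⟩ := hmemDm p hp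
    exact shared_endpoints SpD hcap p h1 h2
  have hdmlab : ∀ p ∈ Dm, dm p.1 = dp p.1 ∧ dm p.2 = dp p.2 := by
    intro p hp
    obtain ⟨e1, e2, e3, e4⟩ := hends p hp
    exact ⟨hmv _ e1 e2, hmv _ e3 e4⟩
  have hxlab : ∀ p ∈ Dm, dmum p.1 = dmup p.1 ∧ dmum p.2 = dmup p.2 := by
    intro p hp
    obtain ⟨e1, e2, e3, e4⟩ := hends p hp
    exact ⟨hxv _ e1 e2, hxv _ e3 e4⟩
  have htriv : ∀ n, Triv (dm n) ↔ Triv (dp n) := by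
    intro n
    by_cases h1 : n = i - 1
    · rw [h1, hm1, hp1]
      constructor <;> (intro h; first | exact absurd h triv_vee | exact absurd h triv_wedge)
    · by_cases h2 : n = i
      · rw [h2, hm2, hp2]
        constructor <;> (intro h; first | exact absurd h triv_vee | exact absurd h triv_wedge)
      · rw [hmv n h1 h2]
  have hside := no_contain_side hnN SpC SpD hcap
  have hnotonw : ∀ n, (n = i-1 ∨ n = i) → ¬ OnCap Dm n := by
    intro n hn hc
    rw [hocd n] at hc
    rcases hn with rfl | rfl
    · exact hc.2.1 rfl
    · exact hc.2.2 rfl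
  have huncap : ∀ n, ¬ OnCap Dm n → n ≠ i-1 → n ≠ i → ¬ OnCap Cp n := by
    intro n hn h1 h2 hc
    exact hn ((hocd n).2 ⟨hc, h1, h2⟩)
  have hwallcapped : ∀ n, ¬ OnCap Cp n → n ≠ i-1 ∧ n ≠ i :=
    fun n hn => ⟨fun he => hn ⟨(i-1, i), hcap, Or.inl he.symm⟩,
                 fun he => hn ⟨(i-1, i), hcap, Or.inr he.symm⟩⟩
  -- Struct dm Dm
  have hStruct : Struct dm Dm := by
    refine ⟨?_, ?_, ?_, ?_⟩
    · intro p hp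
      obtain ⟨l1, l2⟩ := hdmlab p hp
      obtain ⟨h1, h2, h3⟩ := SpC p (hsub hp)
      exact ⟨h1, by rw [l1]; exact h2, by rw [l2]; exact h3⟩
    · intro p hp q hq hne
      exact SpD p (hsub hp) q (hsub hq) hne
    · intro p hp k hk1 hk2 hknt
      have hkw : k ≠ i-1 ∧ k ≠ i := by
        rcases hside p (hsub hp) (hmemDm p hp).2 with h | h <;>
          constructor <;> omega
      rw [htriv k] at hknt
      obtain ⟨q, hq, hq1, hq2, hq3⟩ := SpN p (hsub hp) k hk1 hk2 hknt
      refine ⟨q, ⟨hq, ?_⟩, hq1, hq2, hq3⟩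
      simp only [Set.mem_singleton_iff]
      rintro rfl
      simp only at hq3
      rcases hq3 with h | h <;> omega
    · intro m n hmn hdm hdn hm hn
      by_cases hm1' : m = i - 1
      · rw [hm1', hm1] at hdm; exact Lbl.noConfusion hdm
      · by_cases hm2' : m = i
        · -- m = i : a wedge to its right uncapped contradicts hnR
          by_cases hn1' : n = i - 1
          · omega
          · by_cases hn2' : n = i
            · omega
            · have hnc := huncap n hn hn1' hn2'
              rw [hmv n hn1' hn2'] at hdn
              exact hnR ⟨n, by omega, hdn, hnc⟩
        · have hmc := huncap m hm hm1' hm2'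
          rw [hmv m hm1' hm2'] at hdm
          by_cases hn1' : n = i - 1
          · exact hnL ⟨m, by omega, hdm, hmc⟩
          · by_cases hn2' : n = i
            · rw [hn2', hm2] at hdn; exact Lbl.noConfusion hdn
            · have hnc := huncap n hn hn1' hn2'
              rw [hmv n hn1' hn2'] at hdn
              exact SpS m n hmn hdm hdn hmc hnc
  -- O_m(dmup) is impossible
  have hOmup : ¬ Oriented dm Dm dmup := by
    rintro ⟨o1, o2, o3, o4⟩
    exact o4 (i-1) i (by omega) (hnotonw _ (Or.inl rfl)) (hnotonw _ (Or.inr rfl))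
      (by rw [hm1]; exact triv_wedge) (by rw [hm2]; exact triv_vee) ⟨hu1, hu2⟩
  -- count set computations
  have hckUp : {p ∈ Cp | dmup p.1 = Lbl.wedge ∧ dmup p.2 = Lbl.vee}
      = {p ∈ Dm | dmup p.1 = Lbl.wedge ∧ dmup p.2 = Lbl.vee} := by
    ext p
    simp only [Set.mem_setOf_eq, hDm, Set.mem_diff, Set.mem_singleton_iff]
    constructor
    · rintro ⟨hp, hcw⟩
      refine ⟨⟨hp, ?_⟩, hcw⟩
      rintro rfl
      simp only at hcw
      rw [hu1] at hcw
      exact Lbl.noConfusion hcw.1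
    · rintro ⟨⟨hp, _⟩, hcw⟩
      exact ⟨hp, hcw⟩
  have hsameDm : {p ∈ Dm | dmup p.1 = Lbl.wedge ∧ dmup p.2 = Lbl.vee}
      = {p ∈ Dm | dmum p.1 = Lbl.wedge ∧ dmum p.2 = Lbl.vee} := by
    ext p
    simp only [Set.mem_setOf_eq]
    constructor
    · rintro ⟨hp, hcw⟩
      obtain ⟨l1, l2⟩ := hxlab p hp
      exact ⟨hp, by rw [l1]; exact hcw.1, by rw [l2]; exact hcw.2⟩
    · rintro ⟨hp, hcw⟩
      obtain ⟨l1, l2⟩ := hxlab p hp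
      exact ⟨hp, by rw [← l1]; exact hcw.1, by rw [← l2]; exact hcw.2⟩
  have hckUm : {p ∈ Cp | dmum p.1 = Lbl.wedge ∧ dmum p.2 = Lbl.vee}
      = insert (i-1, i) {p ∈ Dm | dmum p.1 = Lbl.wedge ∧ dmum p.2 = Lbl.vee} := by
    ext p
    simp only [Set.mem_setOf_eq, hDm, Set.mem_diff, Set.mem_singleton_iff,
      Set.mem_insert_iff]
    constructor
    · rintro ⟨hp, hcw⟩
      by_cases h : p = (i-1, i)
      · exact Or.inl h
      · exact Or.inr ⟨⟨hp, h⟩, hcw⟩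
    · rintro (rfl | ⟨⟨hp, _⟩, hcw⟩)
      · exact ⟨hcap, hw1, hw2⟩
      · exact ⟨hp, hcw⟩
  have hsmallnotin : (i-1, i) ∉ {p ∈ Dm | dmum p.1 = Lbl.wedge ∧ dmum p.2 = Lbl.vee} := by
    rintro ⟨⟨_, h⟩, _⟩
    exact h rfl
  have hsetfin : {p ∈ Dm | dmum p.1 = Lbl.wedge ∧ dmum p.2 = Lbl.vee}.Finite :=
    (hfin.subset hsub).subset (fun p hp => hp.1)
  have hKum : clockCount Cp dmum = clockCount Dm dmum + 1 := by
    rw [clockCount, clockCount, hckUm, Set.ncard_insert_of_notMem hsmallnotin hsetfin]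
  have hKup : clockCount Cp dmup = clockCount Dm dmum := by
    rw [clockCount, clockCount, hckUp, hsameDm]
  -- B2 : O_m(dmum) → O_p(dmup), equal counts
  have hB2or : Oriented dm Dm dmum → Oriented dp Cp dmup := by
    rintro ⟨o1, o2, o3, o4⟩
    rw [oriented_iff]
    constructor
    · intro p hp
      by_cases h : p = (i-1, i)
      · rw [h]; exact Or.inl ⟨hu1, hu2⟩
      · have hpD : p ∈ Dm := ⟨hp, by simpa using h⟩
        obtain ⟨l1, l2⟩ := hxlab p hpD
        rcases o2 p hpD with ⟨a1, a2⟩ | ⟨a1, a2⟩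
        · exact Or.inl ⟨by rw [← l1]; exact a1, by rw [← l2]; exact a2⟩
        · exact Or.inr ⟨by rw [← l1]; exact a1, by rw [← l2]; exact a2⟩
    · refine cond134_congr (fun n hn => ?_) ⟨o1, o3, o4⟩
      obtain ⟨w1, w2⟩ := hwallcapped n hn
      exact ⟨fun hc => hn (onCap_mono hsub hc), htriv n, hxv n w1 w2⟩
  -- C1 : O_m(dmum) → O_p(dmum)
  have hC1or : Oriented dm Dm dmum → Oriented dp Cp dmum := by
    rintro ⟨o1, o2, o3, o4⟩
    rw [oriented_iff]
    constructor
    · intro p hp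
      by_cases h : p = (i-1, i)
      · rw [h]; exact Or.inr ⟨hw1, hw2⟩
      · exact o2 p ⟨hp, by simpa using h⟩
    · refine cond134_congr (fun n hn => ?_) ⟨o1, o3, o4⟩
      exact ⟨fun hc => hn (onCap_mono hsub hc), htriv n, rfl⟩
  -- B3 / C3 : forward direction using the counting argument
  have hforward : ∀ x : ℤ → Lbl, SameBlock dp x →
      ∀ y : ℤ → Lbl, y (i-1) = Lbl.wedge → y i = Lbl.vee →
      (∀ n, n ≠ i-1 → n ≠ i → y n = x n) →
      Oriented dp Cp x → Oriented dm Dm y := by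
    intro x hbx y hy1 hy2 hyv hO
    obtain ⟨cb1, cb2⟩ := count_balance SpC SpD hcap hnL hnR hbx hO
    obtain ⟨o1, o2, o3, o4⟩ := hO
    refine ⟨?_, ?_, ?_, ?_⟩
    · -- cond 1
      intro n hn ht
      by_cases h1 : n = i - 1
      · rw [h1, hm1] at ht; exact absurd ht triv_wedge
      · by_cases h2 : n = i
        · rw [h2, hm2] at ht; exact absurd ht triv_vee
        · rw [hyv n h1 h2]
          rw [hmv n h1 h2] at ht
          exact o1 n (huncap n hn h1 h2) ht
    · -- cond 2
      intro p hp
      obtain ⟨e1, e2, e3, e4⟩ := hends p hp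
      rw [hyv _ e1 e2, hyv _ e3 e4]
      exact o2 p (hsub hp)
    · -- cond 3
      intro n hn ht
      by_cases h1 : n = i - 1
      · rw [h1, hy1]; exact Or.inr rfl
      · by_cases h2 : n = i
        · rw [h2, hy2]; exact Or.inl rfl
        · rw [hyv n h1 h2]
          rw [htriv n] at ht
          exact o3 n (huncap n hn h1 h2) ht
    · -- cond 4
      intro m n hmn hm hn htm htn hpair
      by_cases hm1' : m = i - 1
      · rw [hm1', hy1] at hpair; exact Lbl.noConfusion hpair.1
      · by_cases hm2' : m = i
        · -- m = i, so n > i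
          have hn1' : n ≠ i - 1 := by omega
          have hn2' : n ≠ i := by omega
          have hnc := huncap n hn hn1' hn2'
          have htn' : ¬ Triv (dp n) := by rwa [← hmv n hn1' hn2']
          have hxn : x n = Lbl.vee := cb2 n hnc htn' (by omega)
          rw [hyv n hn1' hn2', hxn] at hpair
          exact Lbl.noConfusion hpair.2
        · have hmc := huncap m hm hm1' hm2'
          have htm' : ¬ Triv (dp m) := by rwa [← hmv m hm1' hm2']
          by_cases hn1' : n = i - 1
          · have : x m = Lbl.wedge := cb1 m hmc htm' (by omega)
            rw [← hyv m hm1' hm2'] at this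
            rw [this] at hpair
            exact Lbl.noConfusion hpair.1
          · by_cases hn2' : n = i
            · rw [hn2', hy2] at hpair; exact Lbl.noConfusion hpair.2
            · have hnc := huncap n hn hn1' hn2'
              have htn' : ¬ Triv (dp n) := by rwa [← hmv n hn1' hn2']
              exact o4 m n hmn hmc hnc htm' htn'
                ⟨by rw [← hyv m hm1' hm2']; exact hpair.1,
                 by rw [← hyv n hn1' hn2']; exact hpair.2⟩
  refine ⟨hStruct, ?_, ?_, ?_, ?_, ?_, ?_⟩
  · exact fun h => (hOmup h).elim
  · intro h
    exact ⟨hB2or h, by rw [hKup]⟩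
  · intro h
    exact Or.inr (hforward dmup hbup dmum hw1 hw2 hxv h)
  · intro h
    exact ⟨hC1or h, by rw [hKum]⟩
  · exact fun h => (hOmup h).elim
  · intro h
    exact Or.inr (hforward dmum hbum dmum hw1 hw2 (fun n _ _ => rfl) h)
end Case0
section CaseL
variable {dp dm : ℤ → Lbl} {i : ℤ} {Cp : Set (ℤ × ℤ)} {dmup dmum : ℤ → Lbl}

lemma caseL
    (hp1 : dp (i-1) = Lbl.vee) (hp2 : dp i = Lbl.wedge)
    (hm1 : dm (i-1) = Lbl.wedge) (hm2 : dm i = Lbl.vee)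
    (hmv : ∀ n, n ≠ i-1 → n ≠ i → dm n = dp n)
    (SpC : Caps dp Cp) (SpD : Disj Cp) (SpN : Nest dp Cp) (SpS : Sorted dp Cp)
    (hcap : (i-1, i) ∈ Cp) (hfin : Cp.Finite)
    (hu1 : dmup (i-1) = Lbl.vee) (hu2 : dmup i = Lbl.wedge)
    (hw1 : dmum (i-1) = Lbl.wedge) (hw2 : dmum i = Lbl.vee)
    (hxv : ∀ n, n ≠ i-1 → n ≠ i → dmum n = dmup n)
    (hnN : ¬ ∃ q ∈ Cp, q.1 < i-1 ∧ i < q.2)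
    {a : ℤ} (ha : a < i-1) (hpa : dp a = Lbl.vee) (hnca : ¬ OnCap Cp a)
    (hamax : ∀ c, a < c → c < i-1 → dp c = Lbl.vee → OnCap Cp c) :
    Struct dm (insert (a, i-1) (Cp \ {(i-1, i)})) ∧
      Facts dp dm Cp (insert (a, i-1) (Cp \ {(i-1, i)})) dmup dmum := by
  set Dm := Cp \ {(i-1, i)} with hDm
  set Cm := insert (a, i-1) Dm with hCm
  have hocd := onCap_diff_small SpD hcap
  have hsub : Dm ⊆ Cp := Set.diff_subset
  have hmemDm : ∀ p ∈ Dm, p ∈ Cp ∧ p ≠ (i-1, i) := by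
    intro p hp; exact ⟨hp.1, by simpa using hp.2⟩
  have hends : ∀ p ∈ Dm, p.1 ≠ i-1 ∧ p.1 ≠ i ∧ p.2 ≠ i-1 ∧ p.2 ≠ i := by
    intro p hp
    obtain ⟨h1, h2⟩ := hmemDm p hp
    exact shared_endpoints SpD hcap p h1 h2
  have hnotona : ∀ p ∈ Dm, p.1 ≠ a ∧ p.2 ≠ a := by
    intro p hp
    constructor <;> intro h <;> exact hnca ⟨p, hsub hp, by omega⟩
  have hdmlab : ∀ p ∈ Dm, dm p.1 = dp p.1 ∧ dm p.2 = dp p.2 := by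
    intro p hp
    obtain ⟨e1, e2, e3, e4⟩ := hends p hp
    exact ⟨hmv _ e1 e2, hmv _ e3 e4⟩
  have hxlab : ∀ p ∈ Dm, dmum p.1 = dmup p.1 ∧ dmum p.2 = dmup p.2 := by
    intro p hp
    obtain ⟨e1, e2, e3, e4⟩ := hends p hp
    exact ⟨hxv _ e1 e2, hxv _ e3 e4⟩
  have htriv : ∀ n, Triv (dm n) ↔ Triv (dp n) := by
    intro n
    by_cases h1 : n = i - 1
    · rw [h1, hm1, hp1]
      constructor <;> (intro h; first | exact absurd h triv_vee | exact absurd h triv_wedge)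
    · by_cases h2 : n = i
      · rw [h2, hm2, hp2]
        constructor <;> (intro h; first | exact absurd h triv_vee | exact absurd h triv_wedge)
      · rw [hmv n h1 h2]
  have hside := no_contain_side hnN SpC SpD hcap
  have hnR : ¬ ∃ b, i < b ∧ dp b = Lbl.wedge ∧ ¬ OnCap Cp b := by
    rintro ⟨b, h1, h2, h3⟩
    exact SpS a b (by omega) hpa h2 hnca h3
  have hclean : ∀ c, a < c → c < i-1 → ¬ OnCap Cp c → Triv (dp c) := by
    intro c h1 h2 hc
    by_contra ht
    rcases not_triv_iff.1 ht with h | h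
    · exact hc (hamax c h1 h2 h)
    · exact SpS a c h1 hpa h hnca hc
  have hwa : a ≠ i - 1 := by omega
  have hwa2 : a ≠ i := by omega
  have hdma : dm a = Lbl.vee := by rw [hmv a hwa hwa2]; exact hpa
  have honCm : ∀ n, OnCap Cm n ↔ (a = n ∨ (i-1) = n) ∨ OnCap Dm n := by
    intro n
    rw [hCm, onCap_insert]
  have huncapCm : ∀ n, ¬ OnCap Cm n → n ≠ a ∧ n ≠ i-1 ∧ ¬ OnCap Dm n := by
    intro n hn
    rw [honCm] at hn
    push_neg at hn
    exact ⟨fun h => hn.1.1 h.symm, fun h => hn.1.2 h.symm, hn.2⟩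
  have huncapD : ∀ n, ¬ OnCap Dm n → n ≠ i-1 → n ≠ i → ¬ OnCap Cp n := by
    intro n hn h1 h2 hc
    exact hn ((hocd n).2 ⟨hc, h1, h2⟩)
  have hwallcapped : ∀ n, ¬ OnCap Cp n → n ≠ i-1 ∧ n ≠ i :=
    fun n hn => ⟨fun he => hn ⟨(i-1, i), hcap, Or.inl he.symm⟩,
                 fun he => hn ⟨(i-1, i), hcap, Or.inr he.symm⟩⟩
  have hinotCm : ¬ OnCap Cm i := by
    rw [honCm]
    rintro ((h | h) | h)
    · omega
    · omega
    · rw [hocd] at h; exact h.2.2 rfl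
  have haCm : OnCap Cm a := (honCm a).2 (Or.inl (Or.inl rfl))
  have hi1Cm : OnCap Cm (i-1) := (honCm (i-1)).2 (Or.inl (Or.inr rfl))
  have hiCp : OnCap Cp i := ⟨(i-1, i), hcap, Or.inr rfl⟩
  -- Struct dm Cm
  have hStruct : Struct dm Cm := by
    refine ⟨?_, ?_, ?_, ?_⟩
    · rintro p (rfl | hp)
      · exact ⟨by omega, hdma, hm1⟩
      · obtain ⟨l1, l2⟩ := hdmlab p hp
        obtain ⟨h1, h2, h3⟩ := SpC p (hsub hp)
        exact ⟨h1, by rw [l1]; exact h2, by rw [l2]; exact h3⟩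
    · have key : ∀ q ∈ Dm, a ≠ q.1 ∧ a ≠ q.2 ∧ i-1 ≠ q.1 ∧ i-1 ≠ q.2 := by
        intro q hq
        obtain ⟨n1, n2⟩ := hnotona q hq
        obtain ⟨e1, e2, e3, e4⟩ := hends q hq
        exact ⟨fun h => n1 h.symm, fun h => n2 h.symm, fun h => e1 h.symm, fun h => e3 h.symm⟩
      rintro p (rfl | hp) q (rfl | hq) hpq
      · exact absurd rfl hpq
      · exact key q hq
      · obtain ⟨h1, h2, h3, h4⟩ := key p hp
        exact ⟨h1.symm, h3.symm, h2.symm, h4.symm⟩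
      · exact SpD p (hsub hp) q (hsub hq) hpq
    · rintro p (rfl | hp) k hk1 hk2 hknt
      · -- new cap (a, i-1)
        simp only at hk1 hk2
        have hkw1 : k ≠ i - 1 := by omega
        have hkw2 : k ≠ i := by omega
        rw [htriv k] at hknt
        have hkcap : OnCap Cp k := by
          by_contra hc
          exact hknt (hclean k hk1 hk2 hc)
        obtain ⟨q, hq, hkq⟩ := hkcap
        have hqs : q ≠ (i-1, i) := by
          rintro rfl
          simp only at hkq
          rcases hkq with h | h <;> omega
        have hqD : q ∈ Dm := ⟨hq, by simpa using hqs⟩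
        refine ⟨q, Set.mem_insert_of_mem _ hqD, ?_, ?_, by tauto⟩
        · -- a < q.1
          rcases lt_trichotomy a q.1 with h | h | h
          · exact h
          · exact absurd ⟨q, hq, Or.inl h.symm⟩ hnca
          · -- q.1 < a : a interior of q
            exfalso
            have haq2 : a < q.2 := by
              have := (SpC q hq).1
              rcases hkq with h' | h' <;> omega
            obtain ⟨r, hr, _, _, har⟩ := SpN q hq a h haq2 (by rw [hpa]; exact triv_vee)
            exact hnca ⟨r, hr, har.imp Eq.symm Eq.symm⟩
        · -- q.2 < i-1
          rcases hside q hq hqs with h | h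
          · exact h
          · exfalso
            have := (SpC q hq).1
            rcases hkq with h' | h' <;> omega
      · have hkw : k ≠ i-1 ∧ k ≠ i := by
          rcases hside p (hsub hp) (hmemDm p hp).2 with h | h <;>
            constructor <;> omega
        rw [htriv k] at hknt
        obtain ⟨q, hq, hq1, hq2, hq3⟩ := SpN p (hsub hp) k hk1 hk2 hknt
        have hqs : q ≠ (i-1, i) := by
          rintro rfl
          simp only at hq3
          rcases hq3 with h | h <;> omega
        exact ⟨q, Set.mem_insert_of_mem _ ⟨hq, by simpa using hqs⟩, hq1, hq2, hq3⟩
    · intro m n hmn hdm' hdn' hm hn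
      obtain ⟨hma, hm1', hmD⟩ := huncapCm m hm
      obtain ⟨hna, hn1', hnD⟩ := huncapCm n hn
      by_cases hm2' : m = i
      · by_cases hn2' : n = i
        · omega
        · have hnc := huncapD n hnD hn1' hn2'
          rw [hmv n hn1' hn2'] at hdn'
          exact hnR ⟨n, by omega, hdn', hnc⟩
      · have hmc := huncapD m hmD hm1' hm2'
        rw [hmv m hm1' hm2'] at hdm'
        by_cases hn2' : n = i
        · rw [hn2', hm2] at hdn'; exact Lbl.noConfusion hdn'
        · have hnc := huncapD n hnD hn1' hn2'
          rw [hmv n hn1' hn2'] at hdn'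
          exact SpS m n hmn hdm' hdn' hmc hnc
  -- count sets
  set SUp := {p ∈ Dm | dmup p.1 = Lbl.wedge ∧ dmup p.2 = Lbl.vee} with hSUp
  set SUm := {p ∈ Dm | dmum p.1 = Lbl.wedge ∧ dmum p.2 = Lbl.vee} with hSUm
  have hsame : SUp = SUm := by
    ext p
    simp only [hSUp, hSUm, Set.mem_setOf_eq]
    constructor
    · rintro ⟨hp, hcw⟩
      obtain ⟨l1, l2⟩ := hxlab p hp
      exact ⟨hp, by rw [l1]; exact hcw.1, by rw [l2]; exact hcw.2⟩
    · rintro ⟨hp, hcw⟩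
      obtain ⟨l1, l2⟩ := hxlab p hp
      exact ⟨hp, by rw [← l1]; exact hcw.1, by rw [← l2]; exact hcw.2⟩
  have hSfin : SUp.Finite := (hfin.subset hsub).subset (fun p hp => hp.1)
  have hSfin2 : SUm.Finite := (hfin.subset hsub).subset (fun p hp => hp.1)
  have hKpup : clockCount Cp dmup = SUp.ncard := by
    rw [clockCount]
    congr 1
    ext p
    simp only [Set.mem_setOf_eq, hSUp, hDm, Set.mem_diff, Set.mem_singleton_iff]
    constructor
    · rintro ⟨hp, hcw⟩
      refine ⟨⟨hp, ?_⟩, hcw⟩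
      rintro rfl
      simp only at hcw
      rw [hu1] at hcw
      exact Lbl.noConfusion hcw.1
    · rintro ⟨⟨hp, _⟩, hcw⟩
      exact ⟨hp, hcw⟩
  have hKpum : clockCount Cp dmum = SUm.ncard + 1 := by
    rw [clockCount]
    have : {p ∈ Cp | dmum p.1 = Lbl.wedge ∧ dmum p.2 = Lbl.vee}
        = insert (i-1, i) SUm := by
      ext p
      simp only [Set.mem_setOf_eq, hSUm, hDm, Set.mem_diff, Set.mem_singleton_iff,
        Set.mem_insert_iff]
      constructor
      · rintro ⟨hp, hcw⟩
        by_cases h : p = (i-1, i)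
        · exact Or.inl h
        · exact Or.inr ⟨⟨hp, h⟩, hcw⟩
      · rintro (rfl | ⟨⟨hp, _⟩, hcw⟩)
        · exact ⟨hcap, hw1, hw2⟩
        · exact ⟨hp, hcw⟩
    rw [this, Set.ncard_insert_of_notMem (by rintro ⟨⟨_, h⟩, _⟩; exact h rfl) hSfin2]
  have hKmum : clockCount Cm dmum = SUm.ncard := by
    rw [clockCount, hCm, sep_insert_neg]
    rintro ⟨_, h⟩
    simp only at h
    rw [hw1] at h
    exact Lbl.noConfusion h
  have hKmupW : dmup a = Lbl.wedge → clockCount Cm dmup = SUp.ncard + 1 := by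
    intro hxa
    rw [clockCount, hCm, sep_insert_pos ⟨hxa, hu1⟩,
      Set.ncard_insert_of_notMem ?_ hSfin]
    rintro ⟨hD, _⟩
    exact (hnotona _ hD).1 rfl
  have hKmupV : dmup a = Lbl.vee → clockCount Cm dmup = SUp.ncard := by
    intro hxa
    rw [clockCount, hCm, sep_insert_neg]
    rintro ⟨h, _⟩
    simp only at h
    rw [hxa] at h
    exact Lbl.noConfusion h
  -- orientation transfers
  have hoff_mp : ∀ x1 x2 : ℤ → Lbl, (∀ n, n ≠ i-1 → n ≠ i → x1 n = x2 n) →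
      ∀ n, n ≠ i → n ≠ a → ¬ OnCap Cp n →
      (¬ OnCap Cm n) ∧ (Triv (dm n) ↔ Triv (dp n)) ∧ x1 n = x2 n := by
    intro x1 x2 hx n hni hna hn
    obtain ⟨w1, w2⟩ := hwallcapped n hn
    refine ⟨?_, htriv n, hx n w1 w2⟩
    rw [honCm]
    rintro ((h | h) | h)
    · exact hna h.symm
    · exact w1 h.symm
    · exact hn (onCap_mono hsub h)
  have hoff_pm : ∀ x1 x2 : ℤ → Lbl, (∀ n, n ≠ i-1 → n ≠ i → x1 n = x2 n) →
      ∀ n, n ≠ a → n ≠ i → ¬ OnCap Cm n →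
      (¬ OnCap Cp n) ∧ (Triv (dp n) ↔ Triv (dm n)) ∧ x1 n = x2 n := by
    intro x1 x2 hx n hna hni hn
    obtain ⟨q1, q2, q3⟩ := huncapCm n hn
    exact ⟨huncapD n q3 q2 hni, (htriv n).symm, hx n q2 hni⟩
  have hcoreP : ∀ k, a < k → k < i → OnCap Cp k ∨ Triv (dp k) := by
    intro k h1 h2
    by_cases hk : k = i - 1
    · exact Or.inl ⟨(i-1, i), hcap, Or.inl hk.symm⟩
    · have hk2 : k < i - 1 := by omega
      by_cases hc : OnCap Cp k
      · exact Or.inl hc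
      · exact Or.inr (hclean k h1 hk2 hc)
  have hcoreM : ∀ k, a < k → k < i → OnCap Cm k ∨ Triv (dm k) := by
    intro k h1 h2
    by_cases hk : k = i - 1
    · exact Or.inl (hk ▸ hi1Cm)
    · have hk2 : k < i - 1 := by omega
      rcases hcoreP k h1 h2 with h | h
      · obtain ⟨q, hq, hkq⟩ := h
        have hqs : q ≠ (i-1, i) := by
          rintro rfl
          simp only at hkq
          rcases hkq with h' | h' <;> omega
        exact Or.inl ⟨q, Set.mem_insert_of_mem _ ⟨hq, by simpa using hqs⟩, hkq⟩
      · exact Or.inr ((htriv k).2 h)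
  have hminia : min i a = a := min_eq_right (by omega)
  have hmaxia : max i a = i := max_eq_left (by omega)
  have hminai : min a i = a := min_eq_left (by omega)
  have hmaxai : max a i = i := max_eq_right (by omega)
  -- reading off the label of `a` from the new cap
  have hgetW : ∀ {x : ℤ → Lbl}, x (i-1) = Lbl.vee → Oriented dm Cm x → x a = Lbl.wedge := by
    intro x hx1 hO
    rcases hO.2.1 (a, i-1) (Set.mem_insert _ _) with ⟨h1, h2⟩ | ⟨h1, h2⟩
    · rw [hx1] at h2; exact absurd h2 (fun t => Lbl.noConfusion t)
    · exact h1
  have hgetV : ∀ {x : ℤ → Lbl}, x (i-1) = Lbl.wedge → Oriented dm Cm x → x a = Lbl.vee := by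
    intro x hx1 hO
    rcases hO.2.1 (a, i-1) (Set.mem_insert _ _) with ⟨h1, h2⟩ | ⟨h1, h2⟩
    · exact h1
    · rw [hx1] at h2; exact absurd h2 (fun t => Lbl.noConfusion t)
  -- transfers
  have hm2p : ∀ (x1 x2 : ℤ → Lbl), (∀ n, n ≠ i-1 → n ≠ i → x1 n = x2 n) →
      ((x2 (i-1) = Lbl.vee ∧ x2 i = Lbl.wedge) ∨
        (x2 (i-1) = Lbl.wedge ∧ x2 i = Lbl.vee)) →
      x1 i = x2 a →
      Oriented dm Cm x1 → Oriented dp Cp x2 := by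
    intro x1 x2 hx hsm hxa hO
    obtain ⟨o1, o2, o3, o4⟩ := hO
    rw [oriented_iff]
    constructor
    · intro p hp
      by_cases h : p = (i-1, i)
      · rw [h]; exact hsm
      · have hpD : p ∈ Dm := ⟨hp, by simpa using h⟩
        obtain ⟨e1, e2, e3, e4⟩ := hends p hpD
        rw [← hx _ e1 e2, ← hx _ e3 e4]
        exact o2 p (Set.mem_insert_of_mem _ hpD)
    · refine cond134_transfer (r1 := i) (r2 := a)
        (fun n hni hna hn => hoff_mp x1 x2 hx n hni hna hn)
        hinotCm (by rw [hm2]; exact triv_vee) (Or.inr hiCp)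
        (by rw [hpa]; exact triv_vee) hxa
        (fun k h1 h2 => hcoreP k (by omega) (by omega)) ⟨o1, o3, o4⟩
  have hp2m : ∀ (x1 x2 : ℤ → Lbl), (∀ n, n ≠ i-1 → n ≠ i → x1 n = x2 n) →
      ((x2 a = Lbl.vee ∧ x2 (i-1) = Lbl.wedge) ∨
        (x2 a = Lbl.wedge ∧ x2 (i-1) = Lbl.vee)) →
      x1 a = x2 i →
      Oriented dp Cp x1 → Oriented dm Cm x2 := by
    intro x1 x2 hx hnew hxa hO
    obtain ⟨o1, o2, o3, o4⟩ := hO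
    rw [oriented_iff]
    constructor
    · rintro p (rfl | hpD)
      · exact hnew
      · obtain ⟨e1, e2, e3, e4⟩ := hends p hpD
        rw [← hx _ e1 e2, ← hx _ e3 e4]
        exact o2 p (hsub hpD)
    · refine cond134_transfer (r1 := a) (r2 := i)
        (fun n hna hni hn => hoff_pm x1 x2 hx n hna hni hn)
        hnca (by rw [hpa]; exact triv_vee) (Or.inr haCm)
        (by rw [hm2]; exact triv_vee) hxa
        (fun k h1 h2 => hcoreM k (by omega) (by omega)) ⟨o1, o3, o4⟩
  refine ⟨hStruct, ?_, ?_, ?_, ?_, ?_, ?_⟩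
  · -- B1
    intro h
    have hxaW : dmup a = Lbl.wedge := hgetW hu1 h
    refine ⟨hm2p dmup dmup (fun _ _ _ => rfl) (Or.inl ⟨hu1, hu2⟩)
      (by rw [hu2, hxaW]) h, ?_⟩
    rw [hKpup, hKmupW hxaW]
  · -- B2
    intro h
    have hxaV : dmum a = Lbl.vee := hgetV hw1 h
    refine ⟨hm2p dmum dmup hxv (Or.inl ⟨hu1, hu2⟩)
      (by rw [hw2, ← hxv a hwa hwa2, hxaV]) h, ?_⟩
    rw [hKpup, hKmum, hsame]
  · -- B3
    intro h
    have hnt : ¬ Triv (dp a) := by rw [hpa]; exact triv_vee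
    rcases h.2.2.1 a hnca hnt with hv | hw
    · refine Or.inr (hp2m dmup dmum (fun n h1 h2 => (hxv n h1 h2).symm) (Or.inl ⟨?_, hw1⟩) (by rw [hv, hw2]) h)
      rw [hxv a hwa hwa2, hv]
    · refine Or.inl (hp2m dmup dmup (fun _ _ _ => rfl) (Or.inr ⟨hw, hu1⟩)
        (by rw [hw, hu2]) h)
  · -- C1
    intro h
    have hxaV : dmum a = Lbl.vee := hgetV hw1 h
    refine ⟨hm2p dmum dmum (fun _ _ _ => rfl) (Or.inr ⟨hw1, hw2⟩)
      (by rw [hw2, hxaV]) h, ?_⟩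
    rw [hKpum, hKmum]
  · -- C2
    intro h
    have hxaW : dmup a = Lbl.wedge := hgetW hu1 h
    refine ⟨hm2p dmup dmum (fun n h1 h2 => (hxv n h1 h2).symm) (Or.inr ⟨hw1, hw2⟩)
      (by rw [hu2, hxv a hwa hwa2, hxaW]) h, ?_⟩
    rw [hKpum, hKmupW hxaW, hsame]
  · -- C3
    intro h
    have hnt : ¬ Triv (dp a) := by rw [hpa]; exact triv_vee
    rcases h.2.2.1 a hnca hnt with hv | hw
    · refine Or.inr (hp2m dmum dmum (fun _ _ _ => rfl) (Or.inl ⟨hv, hw1⟩)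
        (by rw [hv, hw2]) h)
    · refine Or.inl (hp2m dmum dmup hxv
        (Or.inr ⟨?_, hu1⟩) (by rw [hw, hu2]) h)
      rw [← hxv a hwa hwa2, hw]
end CaseL
section CaseR
variable {dp dm : ℤ → Lbl} {i : ℤ} {Cp : Set (ℤ × ℤ)} {dmup dmum : ℤ → Lbl}

lemma caseR
    (hp1 : dp (i-1) = Lbl.vee) (hp2 : dp i = Lbl.wedge)
    (hm1 : dm (i-1) = Lbl.wedge) (hm2 : dm i = Lbl.vee)
    (hmv : ∀ n, n ≠ i-1 → n ≠ i → dm n = dp n)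
    (SpC : Caps dp Cp) (SpD : Disj Cp) (SpN : Nest dp Cp) (SpS : Sorted dp Cp)
    (hcap : (i-1, i) ∈ Cp) (hfin : Cp.Finite)
    (hu1 : dmup (i-1) = Lbl.vee) (hu2 : dmup i = Lbl.wedge)
    (hw1 : dmum (i-1) = Lbl.wedge) (hw2 : dmum i = Lbl.vee)
    (hxv : ∀ n, n ≠ i-1 → n ≠ i → dmum n = dmup n)
    (hnN : ¬ ∃ q ∈ Cp, q.1 < i-1 ∧ i < q.2)
    {b : ℤ} (hb : i < b) (hpb : dp b = Lbl.wedge) (hncb : ¬ OnCap Cp b)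
    (hbmin : ∀ c, i < c → c < b → dp c = Lbl.wedge → OnCap Cp c) :
    Struct dm (insert (i, b) (Cp \ {(i-1, i)})) ∧
      Facts dp dm Cp (insert (i, b) (Cp \ {(i-1, i)})) dmup dmum := by
  set Dm := Cp \ {(i-1, i)} with hDm
  set Cm := insert (i, b) Dm with hCm
  have hocd := onCap_diff_small SpD hcap
  have hsub : Dm ⊆ Cp := Set.diff_subset
  have hmemDm : ∀ p ∈ Dm, p ∈ Cp ∧ p ≠ (i-1, i) := by
    intro p hp; exact ⟨hp.1, by simpa using hp.2⟩
  have hends : ∀ p ∈ Dm, p.1 ≠ i-1 ∧ p.1 ≠ i ∧ p.2 ≠ i-1 ∧ p.2 ≠ i := by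
    intro p hp
    obtain ⟨h1, h2⟩ := hmemDm p hp
    exact shared_endpoints SpD hcap p h1 h2
  have hnotonb : ∀ p ∈ Dm, p.1 ≠ b ∧ p.2 ≠ b := by
    intro p hp
    constructor <;> intro h <;> exact hncb ⟨p, hsub hp, by omega⟩
  have hdmlab : ∀ p ∈ Dm, dm p.1 = dp p.1 ∧ dm p.2 = dp p.2 := by
    intro p hp
    obtain ⟨e1, e2, e3, e4⟩ := hends p hp
    exact ⟨hmv _ e1 e2, hmv _ e3 e4⟩
  have hxlab : ∀ p ∈ Dm, dmum p.1 = dmup p.1 ∧ dmum p.2 = dmup p.2 := by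
    intro p hp
    obtain ⟨e1, e2, e3, e4⟩ := hends p hp
    exact ⟨hxv _ e1 e2, hxv _ e3 e4⟩
  have htriv : ∀ n, Triv (dm n) ↔ Triv (dp n) := by
    intro n
    by_cases h1 : n = i - 1
    · rw [h1, hm1, hp1]
      constructor <;> (intro h; first | exact absurd h triv_vee | exact absurd h triv_wedge)
    · by_cases h2 : n = i
      · rw [h2, hm2, hp2]
        constructor <;> (intro h; first | exact absurd h triv_vee | exact absurd h triv_wedge)
      · rw [hmv n h1 h2]
  have hside := no_contain_side hnN SpC SpD hcap
  have hnL : ¬ ∃ a, a < i-1 ∧ dp a = Lbl.vee ∧ ¬ OnCap Cp a := by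
    rintro ⟨a, h1, h2, h3⟩
    exact SpS a b (by omega) h2 hpb h3 hncb
  have hclean : ∀ c, i < c → c < b → ¬ OnCap Cp c → Triv (dp c) := by
    intro c h1 h2 hc
    by_contra ht
    rcases not_triv_iff.1 ht with h | h
    · exact SpS c b h2 h hpb hc hncb
    · exact hc (hbmin c h1 h2 h)
  have hwb : b ≠ i - 1 := by omega
  have hwb2 : b ≠ i := by omega
  have hdmb : dm b = Lbl.wedge := by rw [hmv b hwb hwb2]; exact hpb
  have honCm : ∀ n, OnCap Cm n ↔ (i = n ∨ b = n) ∨ OnCap Dm n := by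
    intro n
    rw [hCm, onCap_insert]
  have huncapCm : ∀ n, ¬ OnCap Cm n → n ≠ i ∧ n ≠ b ∧ ¬ OnCap Dm n := by
    intro n hn
    rw [honCm] at hn
    push_neg at hn
    exact ⟨fun h => hn.1.1 h.symm, fun h => hn.1.2 h.symm, hn.2⟩
  have huncapD : ∀ n, ¬ OnCap Dm n → n ≠ i-1 → n ≠ i → ¬ OnCap Cp n := by
    intro n hn h1 h2 hc
    exact hn ((hocd n).2 ⟨hc, h1, h2⟩)
  have hwallcapped : ∀ n, ¬ OnCap Cp n → n ≠ i-1 ∧ n ≠ i :=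
    fun n hn => ⟨fun he => hn ⟨(i-1, i), hcap, Or.inl he.symm⟩,
                 fun he => hn ⟨(i-1, i), hcap, Or.inr he.symm⟩⟩
  have hi1notCm : ¬ OnCap Cm (i-1) := by
    rw [honCm]
    rintro ((h | h) | h)
    · omega
    · omega
    · rw [hocd] at h; exact h.2.1 rfl
  have hbCm : OnCap Cm b := (honCm b).2 (Or.inl (Or.inr rfl))
  have hiCm : OnCap Cm i := (honCm i).2 (Or.inl (Or.inl rfl))
  have hi1Cp : OnCap Cp (i-1) := ⟨(i-1, i), hcap, Or.inl rfl⟩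
  -- Struct dm Cm
  have hStruct : Struct dm Cm := by
    refine ⟨?_, ?_, ?_, ?_⟩
    · rintro p (rfl | hp)
      · exact ⟨by omega, hm2, hdmb⟩
      · obtain ⟨l1, l2⟩ := hdmlab p hp
        obtain ⟨h1, h2, h3⟩ := SpC p (hsub hp)
        exact ⟨h1, by rw [l1]; exact h2, by rw [l2]; exact h3⟩
    · have key : ∀ q ∈ Dm, i ≠ q.1 ∧ i ≠ q.2 ∧ b ≠ q.1 ∧ b ≠ q.2 := by
        intro q hq
        obtain ⟨n1, n2⟩ := hnotonb q hq
        obtain ⟨e1, e2, e3, e4⟩ := hends q hq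
        exact ⟨fun h => e2 h.symm, fun h => e4 h.symm, fun h => n1 h.symm, fun h => n2 h.symm⟩
      rintro p (rfl | hp) q (rfl | hq) hpq
      · exact absurd rfl hpq
      · exact key q hq
      · obtain ⟨h1, h2, h3, h4⟩ := key p hp
        exact ⟨h1.symm, h3.symm, h2.symm, h4.symm⟩
      · exact SpD p (hsub hp) q (hsub hq) hpq
    · rintro p (rfl | hp) k hk1 hk2 hknt
      · -- new cap (i, b)
        simp only at hk1 hk2
        have hkw1 : k ≠ i - 1 := by omega
        have hkw2 : k ≠ i := by omega
        rw [htriv k] at hknt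
        have hkcap : OnCap Cp k := by
          by_contra hc
          exact hknt (hclean k hk1 hk2 hc)
        obtain ⟨q, hq, hkq⟩ := hkcap
        have hqs : q ≠ (i-1, i) := by
          rintro rfl
          simp only at hkq
          rcases hkq with h | h <;> omega
        have hqD : q ∈ Dm := ⟨hq, by simpa using hqs⟩
        refine ⟨q, Set.mem_insert_of_mem _ hqD, ?_, ?_, by tauto⟩
        · -- i < q.1
          rcases hside q hq hqs with h | h
          · exfalso
            have := (SpC q hq).1
            rcases hkq with h' | h' <;> omega
          · exact h
        · -- q.2 < b
          rcases lt_trichotomy q.2 b with h | h | h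
          · exact h
          · exact absurd ⟨q, hq, Or.inr h⟩ hncb
          · exfalso
            have hbq1 : q.1 < b := by
              have := (SpC q hq).1
              rcases hkq with h' | h' <;> omega
            obtain ⟨r, hr, _, _, hbr⟩ := SpN q hq b hbq1 h (by rw [hpb]; exact triv_wedge)
            exact hncb ⟨r, hr, hbr.imp Eq.symm Eq.symm⟩
      · have hkw : k ≠ i-1 ∧ k ≠ i := by
          rcases hside p (hsub hp) (hmemDm p hp).2 with h | h <;>
            constructor <;> omega
        rw [htriv k] at hknt
        obtain ⟨q, hq, hq1, hq2, hq3⟩ := SpN p (hsub hp) k hk1 hk2 hknt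
        have hqs : q ≠ (i-1, i) := by
          rintro rfl
          simp only at hq3
          rcases hq3 with h | h <;> omega
        exact ⟨q, Set.mem_insert_of_mem _ ⟨hq, by simpa using hqs⟩, hq1, hq2, hq3⟩
    · intro m n hmn hdm' hdn' hm hn
      obtain ⟨hmi, hmb, hmD⟩ := huncapCm m hm
      obtain ⟨hni, hnb, hnD⟩ := huncapCm n hn
      by_cases hm1' : m = i - 1
      · rw [hm1', hm1] at hdm'; exact Lbl.noConfusion hdm'
      · have hmc := huncapD m hmD hm1' hmi
        rw [hmv m hm1' hmi] at hdm'
        by_cases hn1' : n = i - 1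
        · exact hnL ⟨m, by omega, hdm', hmc⟩
        · have hnc := huncapD n hnD hn1' hni
          rw [hmv n hn1' hni] at hdn'
          exact SpS m n hmn hdm' hdn' hmc hnc
  -- count sets
  set SUp := {p ∈ Dm | dmup p.1 = Lbl.wedge ∧ dmup p.2 = Lbl.vee} with hSUp
  set SUm := {p ∈ Dm | dmum p.1 = Lbl.wedge ∧ dmum p.2 = Lbl.vee} with hSUm
  have hsame : SUp = SUm := by
    ext p
    simp only [hSUp, hSUm, Set.mem_setOf_eq]
    constructor
    · rintro ⟨hp, hcw⟩
      obtain ⟨l1, l2⟩ := hxlab p hp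
      exact ⟨hp, by rw [l1]; exact hcw.1, by rw [l2]; exact hcw.2⟩
    · rintro ⟨hp, hcw⟩
      obtain ⟨l1, l2⟩ := hxlab p hp
      exact ⟨hp, by rw [← l1]; exact hcw.1, by rw [← l2]; exact hcw.2⟩
  have hSfin : SUp.Finite := (hfin.subset hsub).subset (fun p hp => hp.1)
  have hSfin2 : SUm.Finite := (hfin.subset hsub).subset (fun p hp => hp.1)
  have hKpup : clockCount Cp dmup = SUp.ncard := by
    rw [clockCount]
    congr 1
    ext p
    simp only [Set.mem_setOf_eq, hSUp, hDm, Set.mem_diff, Set.mem_singleton_iff]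
    constructor
    · rintro ⟨hp, hcw⟩
      refine ⟨⟨hp, ?_⟩, hcw⟩
      rintro rfl
      simp only at hcw
      rw [hu1] at hcw
      exact Lbl.noConfusion hcw.1
    · rintro ⟨⟨hp, _⟩, hcw⟩
      exact ⟨hp, hcw⟩
  have hKpum : clockCount Cp dmum = SUm.ncard + 1 := by
    rw [clockCount]
    have : {p ∈ Cp | dmum p.1 = Lbl.wedge ∧ dmum p.2 = Lbl.vee}
        = insert (i-1, i) SUm := by
      ext p
      simp only [Set.mem_setOf_eq, hSUm, hDm, Set.mem_diff, Set.mem_singleton_iff,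
        Set.mem_insert_iff]
      constructor
      · rintro ⟨hp, hcw⟩
        by_cases h : p = (i-1, i)
        · exact Or.inl h
        · exact Or.inr ⟨⟨hp, h⟩, hcw⟩
      · rintro (rfl | ⟨⟨hp, _⟩, hcw⟩)
        · exact ⟨hcap, hw1, hw2⟩
        · exact ⟨hp, hcw⟩
    rw [this, Set.ncard_insert_of_notMem (by rintro ⟨⟨_, h⟩, _⟩; exact h rfl) hSfin2]
  have hKmum : clockCount Cm dmum = SUm.ncard := by
    rw [clockCount, hCm, sep_insert_neg]
    rintro ⟨h, _⟩
    simp only at h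
    rw [hw2] at h
    exact Lbl.noConfusion h
  have hKmupV : dmup b = Lbl.vee → clockCount Cm dmup = SUp.ncard + 1 := by
    intro hxb
    rw [clockCount, hCm, sep_insert_pos ⟨hu2, hxb⟩,
      Set.ncard_insert_of_notMem ?_ hSfin]
    rintro ⟨hD, _⟩
    exact (hends _ hD).2.1 rfl
  have hKmupW : dmup b = Lbl.wedge → clockCount Cm dmup = SUp.ncard := by
    intro hxb
    rw [clockCount, hCm, sep_insert_neg]
    rintro ⟨_, h⟩
    simp only at h
    rw [hxb] at h
    exact Lbl.noConfusion h
  -- off-wall transfers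
  have hoff_mp : ∀ x1 x2 : ℤ → Lbl, (∀ n, n ≠ i-1 → n ≠ i → x1 n = x2 n) →
      ∀ n, n ≠ i-1 → n ≠ b → ¬ OnCap Cp n →
      (¬ OnCap Cm n) ∧ (Triv (dm n) ↔ Triv (dp n)) ∧ x1 n = x2 n := by
    intro x1 x2 hx n hni hnb hn
    obtain ⟨w1, w2⟩ := hwallcapped n hn
    refine ⟨?_, htriv n, hx n w1 w2⟩
    rw [honCm]
    rintro ((h | h) | h)
    · exact w2 h.symm
    · exact hnb h.symm
    · exact hn (onCap_mono hsub h)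
  have hoff_pm : ∀ x1 x2 : ℤ → Lbl, (∀ n, n ≠ i-1 → n ≠ i → x1 n = x2 n) →
      ∀ n, n ≠ b → n ≠ i-1 → ¬ OnCap Cm n →
      (¬ OnCap Cp n) ∧ (Triv (dp n) ↔ Triv (dm n)) ∧ x1 n = x2 n := by
    intro x1 x2 hx n hnb hni hn
    obtain ⟨q1, q2, q3⟩ := huncapCm n hn
    exact ⟨huncapD n q3 hni q1, (htriv n).symm, hx n hni q1⟩
  have hcoreP : ∀ k, i - 1 < k → k < b → OnCap Cp k ∨ Triv (dp k) := by
    intro k h1 h2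
    by_cases hk : k = i
    · exact Or.inl ⟨(i-1, i), hcap, Or.inr hk.symm⟩
    · have hk2 : i < k := by omega
      by_cases hc : OnCap Cp k
      · exact Or.inl hc
      · exact Or.inr (hclean k hk2 h2 hc)
  have hcoreM : ∀ k, i - 1 < k → k < b → OnCap Cm k ∨ Triv (dm k) := by
    intro k h1 h2
    by_cases hk : k = i
    · exact Or.inl (hk ▸ hiCm)
    · rcases hcoreP k h1 h2 with h | h
      · obtain ⟨q, hq, hkq⟩ := h
        have hqs : q ≠ (i-1, i) := by
          rintro rfl
          simp only at hkq
          rcases hkq with h' | h' <;> omega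
        exact Or.inl ⟨q, Set.mem_insert_of_mem _ ⟨hq, by simpa using hqs⟩, hkq⟩
      · exact Or.inr ((htriv k).2 h)
  -- reading off the label of `b` from the new cap
  have hgetV : ∀ {x : ℤ → Lbl}, x i = Lbl.wedge → Oriented dm Cm x → x b = Lbl.vee := by
    intro x hx1 hO
    rcases hO.2.1 (i, b) (Set.mem_insert _ _) with ⟨h1, h2⟩ | ⟨h1, h2⟩
    · rw [hx1] at h1; exact absurd h1 (fun t => Lbl.noConfusion t)
    · exact h2
  have hgetW : ∀ {x : ℤ → Lbl}, x i = Lbl.vee → Oriented dm Cm x → x b = Lbl.wedge := by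
    intro x hx1 hO
    rcases hO.2.1 (i, b) (Set.mem_insert _ _) with ⟨h1, h2⟩ | ⟨h1, h2⟩
    · exact h2
    · rw [hx1] at h1; exact absurd h1 (fun t => Lbl.noConfusion t)
  -- transfers
  have hm2p : ∀ (x1 x2 : ℤ → Lbl), (∀ n, n ≠ i-1 → n ≠ i → x1 n = x2 n) →
      ((x2 (i-1) = Lbl.vee ∧ x2 i = Lbl.wedge) ∨
        (x2 (i-1) = Lbl.wedge ∧ x2 i = Lbl.vee)) →
      x1 (i-1) = x2 b →
      Oriented dm Cm x1 → Oriented dp Cp x2 := by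
    intro x1 x2 hx hsm hxb hO
    obtain ⟨o1, o2, o3, o4⟩ := hO
    rw [oriented_iff]
    constructor
    · intro p hp
      by_cases h : p = (i-1, i)
      · rw [h]; exact hsm
      · have hpD : p ∈ Dm := ⟨hp, by simpa using h⟩
        obtain ⟨e1, e2, e3, e4⟩ := hends p hpD
        rw [← hx _ e1 e2, ← hx _ e3 e4]
        exact o2 p (Set.mem_insert_of_mem _ hpD)
    · refine cond134_transfer (r1 := i-1) (r2 := b)
        (fun n hni hnb hn => hoff_mp x1 x2 hx n hni hnb hn)
        hi1notCm (by rw [hm1]; exact triv_wedge) (Or.inr hi1Cp)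
        (by rw [hpb]; exact triv_wedge) hxb
        (fun k h1 h2 => hcoreP k (by omega) (by omega)) ⟨o1, o3, o4⟩
  have hp2m : ∀ (x1 x2 : ℤ → Lbl), (∀ n, n ≠ i-1 → n ≠ i → x1 n = x2 n) →
      ((x2 i = Lbl.vee ∧ x2 b = Lbl.wedge) ∨
        (x2 i = Lbl.wedge ∧ x2 b = Lbl.vee)) →
      x1 b = x2 (i-1) →
      Oriented dp Cp x1 → Oriented dm Cm x2 := by
    intro x1 x2 hx hnew hxb hO
    obtain ⟨o1, o2, o3, o4⟩ := hO
    rw [oriented_iff]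
    constructor
    · rintro p (rfl | hpD)
      · exact hnew
      · obtain ⟨e1, e2, e3, e4⟩ := hends p hpD
        rw [← hx _ e1 e2, ← hx _ e3 e4]
        exact o2 p (hsub hpD)
    · refine cond134_transfer (r1 := b) (r2 := i-1)
        (fun n hnb hni hn => hoff_pm x1 x2 hx n hnb hni hn)
        hncb (by rw [hpb]; exact triv_wedge) (Or.inr hbCm)
        (by rw [hm1]; exact triv_wedge) hxb
        (fun k h1 h2 => hcoreM k (by omega) (by omega)) ⟨o1, o3, o4⟩
  refine ⟨hStruct, ?_, ?_, ?_, ?_, ?_, ?_⟩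
  · -- B1
    intro h
    have hxbV : dmup b = Lbl.vee := hgetV hu2 h
    refine ⟨hm2p dmup dmup (fun _ _ _ => rfl) (Or.inl ⟨hu1, hu2⟩)
      (by rw [hu1, hxbV]) h, ?_⟩
    rw [hKpup, hKmupV hxbV]
  · -- B2
    intro h
    have hxbW : dmum b = Lbl.wedge := hgetW hw2 h
    refine ⟨hm2p dmum dmup hxv (Or.inl ⟨hu1, hu2⟩)
      (by rw [hw1, ← hxv b hwb hwb2, hxbW]) h, ?_⟩
    rw [hKpup, hKmum, hsame]
  · -- B3
    intro h
    have hnt : ¬ Triv (dp b) := by rw [hpb]; exact triv_wedge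
    rcases h.2.2.1 b hncb hnt with hv | hw
    · refine Or.inl (hp2m dmup dmup (fun _ _ _ => rfl) (Or.inr ⟨hu2, hv⟩)
        (by rw [hv, hu1]) h)
    · refine Or.inr (hp2m dmup dmum (fun n h1 h2 => (hxv n h1 h2).symm)
        (Or.inl ⟨hw2, ?_⟩) (by rw [hw, hw1]) h)
      rw [hxv b hwb hwb2, hw]
  · -- C1
    intro h
    have hxbW : dmum b = Lbl.wedge := hgetW hw2 h
    refine ⟨hm2p dmum dmum (fun _ _ _ => rfl) (Or.inr ⟨hw1, hw2⟩)
      (by rw [hw1, hxbW]) h, ?_⟩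
    rw [hKpum, hKmum]
  · -- C2
    intro h
    have hxbV : dmup b = Lbl.vee := hgetV hu2 h
    refine ⟨hm2p dmup dmum (fun n h1 h2 => (hxv n h1 h2).symm) (Or.inr ⟨hw1, hw2⟩)
      (by rw [hu1, hxv b hwb hwb2, hxbV]) h, ?_⟩
    rw [hKpum, hKmupV hxbV, hsame]
  · -- C3
    intro h
    have hnt : ¬ Triv (dp b) := by rw [hpb]; exact triv_wedge
    rcases h.2.2.1 b hncb hnt with hv | hw
    · refine Or.inl (hp2m dmum dmup hxv (Or.inr ⟨hu2, ?_⟩)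
        (by rw [hv, hu1]) h)
      rw [← hxv b hwb hwb2, hv]
    · refine Or.inr (hp2m dmum dmum (fun _ _ _ => rfl) (Or.inl ⟨hw2, hw⟩)
        (by rw [hw, hw1]) h)
end CaseR
section CaseN
variable {dp dm : ℤ → Lbl} {i : ℤ} {Cp : Set (ℤ × ℤ)} {dmup dmum : ℤ → Lbl}

lemma caseN
    (hp1 : dp (i-1) = Lbl.vee) (hp2 : dp i = Lbl.wedge)
    (hm1 : dm (i-1) = Lbl.wedge) (hm2 : dm i = Lbl.vee)
    (hmv : ∀ n, n ≠ i-1 → n ≠ i → dm n = dp n)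
    (SpC : Caps dp Cp) (SpD : Disj Cp) (SpN : Nest dp Cp) (SpS : Sorted dp Cp)
    (hcap : (i-1, i) ∈ Cp) (hfin : Cp.Finite)
    (hu1 : dmup (i-1) = Lbl.vee) (hu2 : dmup i = Lbl.wedge)
    (hw1 : dmum (i-1) = Lbl.wedge) (hw2 : dmum i = Lbl.vee)
    (hxv : ∀ n, n ≠ i-1 → n ≠ i → dmum n = dmup n)
    {a b : ℤ} (hq0 : (a, b) ∈ Cp) (haw : a < i-1) (hbw : i < b)
    (hmin : ∀ q ∈ Cp, q.1 < i-1 → i < q.2 → (b - a).toNat ≤ (q.2 - q.1).toNat) :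
    Struct dm (insert (a, i-1) (insert (i, b) ((Cp \ {(i-1, i)}) \ {(a, b)}))) ∧
      Facts dp dm Cp (insert (a, i-1) (insert (i, b) ((Cp \ {(i-1, i)}) \ {(a, b)})))
        dmup dmum := by
  have hpa : dp a = Lbl.vee := (SpC _ hq0).2.1
  have hpb : dp b = Lbl.wedge := (SpC _ hq0).2.2
  set Sh := (Cp \ {(i-1, i)}) \ {(a, b)} with hSh
  set Cm := insert (a, i-1) (insert (i, b) Sh) with hCmdef
  have hshsub : Sh ⊆ Cp := fun p hp => hp.1.1
  have hmemSh : ∀ p ∈ Sh, p ∈ Cp ∧ p ≠ (i-1, i) ∧ p ≠ (a, b) := by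
    intro p hp
    exact ⟨hp.1.1, by simpa using hp.1.2, by simpa using hp.2⟩
  have hends : ∀ p ∈ Sh, p.1 ≠ i-1 ∧ p.1 ≠ i ∧ p.2 ≠ i-1 ∧ p.2 ≠ i := by
    intro p hp
    obtain ⟨h1, h2, _⟩ := hmemSh p hp
    exact shared_endpoints SpD hcap p h1 h2
  have hendsab : ∀ p ∈ Sh, p.1 ≠ a ∧ p.1 ≠ b ∧ p.2 ≠ a ∧ p.2 ≠ b := by
    intro p hp
    obtain ⟨h1, _, h2⟩ := hmemSh p hp
    obtain ⟨e1, e2, e3, e4⟩ := SpD p h1 (a, b) hq0 h2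
    exact ⟨e1, e2, e3, e4⟩
  have hdmlab : ∀ p ∈ Sh, dm p.1 = dp p.1 ∧ dm p.2 = dp p.2 := by
    intro p hp
    obtain ⟨e1, e2, e3, e4⟩ := hends p hp
    exact ⟨hmv _ e1 e2, hmv _ e3 e4⟩
  have hxlab : ∀ p ∈ Sh, dmum p.1 = dmup p.1 ∧ dmum p.2 = dmup p.2 := by
    intro p hp
    obtain ⟨e1, e2, e3, e4⟩ := hends p hp
    exact ⟨hxv _ e1 e2, hxv _ e3 e4⟩
  have htriv : ∀ n, Triv (dm n) ↔ Triv (dp n) := by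
    intro n
    by_cases h1 : n = i - 1
    · rw [h1, hm1, hp1]
      constructor <;> (intro h; first | exact absurd h triv_vee | exact absurd h triv_wedge)
    · by_cases h2 : n = i
      · rw [h2, hm2, hp2]
        constructor <;> (intro h; first | exact absurd h triv_vee | exact absurd h triv_wedge)
      · rw [hmv n h1 h2]
  have haw2 : a ≠ i - 1 := by omega
  have haw3 : a ≠ i := by omega
  have hbw2 : b ≠ i - 1 := by omega
  have hbw3 : b ≠ i := by omega
  have hdma : dm a = Lbl.vee := by rw [hmv a haw2 haw3]; exact hpa
  have hdmb : dm b = Lbl.wedge := by rw [hmv b hbw2 hbw3]; exact hpb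
  have hxa : dmum a = dmup a := hxv a haw2 haw3
  have hxb : dmum b = dmup b := hxv b hbw2 hbw3
  have hq0inP : ∀ p ∈ Cp, p ≠ (a, b) → p.1 < i-1 → i < p.2 → p.1 < a ∧ b < p.2 := by
    intro p hp hne h1 h2
    have hp1a : p.1 ≠ a := by
      intro h
      exact hne (endpoint_eq SpD hp hq0 (Or.inl h))
    have hlta : p.1 < a := by
      by_contra hle
      push_neg at hle
      have hlt : a < p.1 := by omega
      have h3 := noncross SpC SpD SpN hq0 hp hlt (by omega)
      have hw := hmin p hp h1 h2
      have := (SpC p hp).1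
      omega
    refine ⟨hlta, ?_⟩
    have h3 := noncross SpC SpD SpN hp hq0 hlta (by omega)
    have hb2 : p.2 ≠ b := by
      intro h
      exact hne (endpoint_eq SpD hp hq0 (by omega))
    omega
  have honCm : ∀ n, OnCap Cm n ↔
      ((a = n ∨ (i-1) = n) ∨ ((i = n ∨ b = n) ∨ OnCap Sh n)) := by
    intro n
    rw [hCmdef, onCap_insert, onCap_insert]
  have hOnEq : ∀ n, OnCap Cm n ↔ OnCap Cp n := by
    intro n
    rw [honCm]
    constructor
    · rintro ((h | h) | ((h | h) | h))
      · exact ⟨(a, b), hq0, Or.inl h⟩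
      · exact ⟨(i-1, i), hcap, Or.inl h⟩
      · exact ⟨(i-1, i), hcap, Or.inr h⟩
      · exact ⟨(a, b), hq0, Or.inr h⟩
      · exact onCap_mono hshsub h
    · rintro ⟨p, hp, hn⟩
      by_cases h1 : p = (i-1, i)
      · rw [h1] at hn
        simp only at hn
        rcases hn with h | h
        · exact Or.inl (Or.inr h)
        · exact Or.inr (Or.inl (Or.inl h))
      · by_cases h2 : p = (a, b)
        · rw [h2] at hn
          simp only at hn
          rcases hn with h | h
          · exact Or.inl (Or.inl h)
          · exact Or.inr (Or.inl (Or.inr h))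
        · exact Or.inr (Or.inr ⟨p, ⟨⟨hp, by simpa using h1⟩, by simpa using h2⟩, hn⟩)
  have hwallcapped : ∀ n, ¬ OnCap Cp n → n ≠ i-1 ∧ n ≠ i :=
    fun n hn => ⟨fun he => hn ⟨(i-1, i), hcap, Or.inl he.symm⟩,
                 fun he => hn ⟨(i-1, i), hcap, Or.inr he.symm⟩⟩
  have hStruct : Struct dm Cm := by
    refine ⟨?_, ?_, ?_, ?_⟩
    · rintro p (rfl | (rfl | hp))
      · exact ⟨by omega, hdma, hm1⟩
      · exact ⟨by omega, hm2, hdmb⟩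
      · obtain ⟨l1, l2⟩ := hdmlab p hp
        obtain ⟨h1, h2, h3⟩ := SpC p (hshsub hp)
        exact ⟨h1, by rw [l1]; exact h2, by rw [l2]; exact h3⟩
    · have key : ∀ q ∈ Sh, ∀ c, (c = a ∨ c = i-1 ∨ c = i ∨ c = b) →
          c ≠ q.1 ∧ c ≠ q.2 := by
        intro q hq c hc
        obtain ⟨e1, e2, e3, e4⟩ := hends q hq
        obtain ⟨f1, f2, f3, f4⟩ := hendsab q hq
        constructor <;> intro h <;> rcases hc with rfl | rfl | rfl | rfl <;> omega
      rintro p (rfl | (rfl | hp)) q (rfl | (rfl | hq)) hpq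
      · exact absurd rfl hpq
      · exact ⟨by omega, by omega, by omega, by omega⟩
      · obtain ⟨k1, k2⟩ := key q hq a (Or.inl rfl)
        obtain ⟨k3, k4⟩ := key q hq (i-1) (Or.inr (Or.inl rfl))
        exact ⟨k1, k2, k3, k4⟩
      · exact ⟨by omega, by omega, by omega, by omega⟩
      · exact absurd rfl hpq
      · obtain ⟨k1, k2⟩ := key q hq i (Or.inr (Or.inr (Or.inl rfl)))
        obtain ⟨k3, k4⟩ := key q hq b (Or.inr (Or.inr (Or.inr rfl)))
        exact ⟨k1, k2, k3, k4⟩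
      · obtain ⟨k1, k2⟩ := key p hp a (Or.inl rfl)
        obtain ⟨k3, k4⟩ := key p hp (i-1) (Or.inr (Or.inl rfl))
        exact ⟨k1.symm, k3.symm, k2.symm, k4.symm⟩
      · obtain ⟨k1, k2⟩ := key p hp i (Or.inr (Or.inr (Or.inl rfl)))
        obtain ⟨k3, k4⟩ := key p hp b (Or.inr (Or.inr (Or.inr rfl)))
        exact ⟨k1.symm, k3.symm, k2.symm, k4.symm⟩
      · exact SpD p (hshsub hp) q (hshsub hq) hpq
    · -- Nest
      have hwitness : ∀ k (q : ℤ × ℤ), q ∈ Cp → (k = q.1 ∨ k = q.2) → k ≠ i-1 → k ≠ i →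
          q ≠ (i-1, i) := by
        intro k q hq hkq hk1 hk2
        rintro rfl
        simp only at hkq
        rcases hkq with h | h <;> omega
      rintro p (rfl | (rfl | hp)) k hk1 hk2 hknt
      · simp only at hk1 hk2
        have hkw1 : k ≠ i - 1 := by omega
        have hkw2 : k ≠ i := by omega
        rw [htriv k] at hknt
        obtain ⟨q, hq, hq1, hq2, hq3⟩ := SpN (a, b) hq0 k (by simpa using hk1)
          (by simp only; omega) hknt
        simp only at hq1 hq2
        have hqsm : q ≠ (i-1, i) := hwitness k q hq hq3 hkw1 hkw2
        have hqq0 : q ≠ (a, b) := by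
          intro h
          rw [h] at hq1
          simp only at hq1
          omega
        have hq2' : q.2 < i - 1 := by
          by_contra hle
          push_neg at hle
          obtain ⟨e1, e2, e3, e4⟩ := shared_endpoints SpD hcap q hq hqsm
          have hq2i : i < q.2 := by omega
          have hq1i : q.1 < i - 1 := by
            have hqlt := (SpC q hq).1
            rcases hq3 with h | h <;> omega
          have := hmin q hq hq1i hq2i
          omega
        exact ⟨q, Or.inr (Or.inr ⟨⟨hq, by simpa using hqsm⟩, by simpa using hqq0⟩),
          by simpa using hq1, by simpa using hq2', hq3⟩
      · simp only at hk1 hk2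
        have hkw1 : k ≠ i - 1 := by omega
        have hkw2 : k ≠ i := by omega
        rw [htriv k] at hknt
        obtain ⟨q, hq, hq1, hq2, hq3⟩ := SpN (a, b) hq0 k (by simp only; omega)
          (by simpa using hk2) hknt
        simp only at hq1 hq2
        have hqsm : q ≠ (i-1, i) := hwitness k q hq hq3 hkw1 hkw2
        have hqq0 : q ≠ (a, b) := by
          intro h
          rw [h] at hq1
          simp only at hq1
          omega
        have hq1' : i < q.1 := by
          by_contra hle
          push_neg at hle
          obtain ⟨e1, e2, e3, e4⟩ := shared_endpoints SpD hcap q hq hqsm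
          have hq1i : q.1 < i - 1 := by omega
          have hq2i : i < q.2 := by
            have hqlt := (SpC q hq).1
            rcases hq3 with h | h <;> omega
          have := hmin q hq hq1i hq2i
          omega
        exact ⟨q, Or.inr (Or.inr ⟨⟨hq, by simpa using hqsm⟩, by simpa using hqq0⟩),
          by simpa using hq1', by simpa using hq2, hq3⟩
      · obtain ⟨hpC, hpsm, hpq0⟩ := hmemSh p hp
        rw [htriv k] at hknt
        obtain ⟨q, hq, hq1, hq2, hq3⟩ := SpN p hpC k hk1 hk2 hknt
        by_cases hqsm : q = (i-1, i)
        · rw [hqsm] at hq1 hq2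
          simp only at hq1 hq2
          obtain ⟨hpa', hpb'⟩ := hq0inP p hpC hpq0 hq1 (by omega)
          rw [hqsm] at hq3
          simp only at hq3
          rcases hq3 with hk | hk
          · exact ⟨(a, i-1), Or.inl rfl, by simpa using hpa', by simp only; omega,
              Or.inr hk⟩
          · exact ⟨(i, b), Or.inr (Or.inl rfl), by simp only; omega, by simpa using hpb',
              Or.inl hk⟩
        · by_cases hqq0 : q = (a, b)
          · rw [hqq0] at hq1 hq2
            simp only at hq1 hq2
            rw [hqq0] at hq3
            simp only at hq3
            rcases hq3 with hk | hk
            · exact ⟨(a, i-1), Or.inl rfl, by simpa using hq1, by simp only; omega,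
                Or.inl hk⟩
            · exact ⟨(i, b), Or.inr (Or.inl rfl), by simp only; omega, by simpa using hq2,
                Or.inr hk⟩
          · exact ⟨q, Or.inr (Or.inr ⟨⟨hq, by simpa using hqsm⟩, by simpa using hqq0⟩),
              hq1, hq2, hq3⟩
    · intro m n hmn hdm' hdn' hm hn
      rw [hOnEq] at hm hn
      obtain ⟨m1, m2⟩ := hwallcapped m hm
      obtain ⟨n1, n2⟩ := hwallcapped n hn
      rw [hmv m m1 m2] at hdm'
      rw [hmv n n1 n2] at hdn'
      exact SpS m n hmn hdm' hdn' hm hn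
  -- count sets
  set SUp := {p ∈ Sh | dmup p.1 = Lbl.wedge ∧ dmup p.2 = Lbl.vee} with hSUp
  set SUm := {p ∈ Sh | dmum p.1 = Lbl.wedge ∧ dmum p.2 = Lbl.vee} with hSUm
  have hsame : SUp = SUm := by
    ext p
    simp only [hSUp, hSUm, Set.mem_setOf_eq]
    constructor
    · rintro ⟨hp, hcw⟩
      obtain ⟨l1, l2⟩ := hxlab p hp
      exact ⟨hp, by rw [l1]; exact hcw.1, by rw [l2]; exact hcw.2⟩
    · rintro ⟨hp, hcw⟩
      obtain ⟨l1, l2⟩ := hxlab p hp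
      exact ⟨hp, by rw [← l1]; exact hcw.1, by rw [← l2]; exact hcw.2⟩
  have hSfin : SUp.Finite := (hfin.subset hshsub).subset (fun p hp => hp.1)
  have hSfin2 : SUm.Finite := (hfin.subset hshsub).subset (fun p hp => hp.1)
  have hq0Sh : (a, b) ∉ Sh := by
    rintro ⟨_, h⟩
    exact h rfl
  have hsmSh : ((i-1, i) : ℤ × ℤ) ∉ Sh := by
    rintro ⟨⟨_, h⟩, _⟩
    exact h rfl
  have hq0ne : ((a, b) : ℤ × ℤ) ≠ (i-1, i) := by
    intro h
    have := congrArg Prod.fst h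
    simp only at this
    omega
  have hCpdec : Cp = insert (i-1, i) (insert (a, b) Sh) := by
    ext p
    simp only [hSh, Set.mem_insert_iff, Set.mem_diff, Set.mem_singleton_iff]
    constructor
    · intro hp
      by_cases h1 : p = (i-1, i)
      · exact Or.inl h1
      · by_cases h2 : p = (a, b)
        · exact Or.inr (Or.inl h2)
        · exact Or.inr (Or.inr ⟨⟨hp, h1⟩, h2⟩)
    · rintro (rfl | (rfl | h))
      · exact hcap
      · exact hq0
      · exact h.1.1
  have habSUp : ((a, b) : ℤ × ℤ) ∉ SUp := fun h => hq0Sh h.1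
  have habSUm : ((a, b) : ℤ × ℤ) ∉ SUm := fun h => hq0Sh h.1
  have hup_sm : ¬ (dmup (i-1) = Lbl.wedge ∧ dmup i = Lbl.vee) := by
    rintro ⟨h, -⟩
    rw [hu1] at h
    exact Lbl.noConfusion h
  have hum_ib : ¬ (dmum i = Lbl.wedge ∧ dmum b = Lbl.vee) := by
    rintro ⟨h, -⟩
    rw [hw2] at h
    exact Lbl.noConfusion h
  have hum_ai : ¬ (dmum a = Lbl.wedge ∧ dmum (i-1) = Lbl.vee) := by
    rintro ⟨-, h⟩
    rw [hw1] at h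
    exact Lbl.noConfusion h
  -- Cp counts
  have hKpupV : dmup a = Lbl.vee → clockCount Cp dmup = SUp.ncard := by
    intro hv
    have hnot : ¬ (dmup a = Lbl.wedge ∧ dmup b = Lbl.vee) := by
      rintro ⟨h, -⟩
      rw [hv] at h
      exact Lbl.noConfusion h
    rw [clockCount, hCpdec, sep_insert_neg hup_sm, sep_insert_neg hnot]
  have hKpupW : dmup a = Lbl.wedge → dmup b = Lbl.vee →
      clockCount Cp dmup = SUp.ncard + 1 := by
    intro hw hv
    rw [clockCount, hCpdec, sep_insert_neg hup_sm, sep_insert_pos ⟨hw, hv⟩,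
      Set.ncard_insert_of_notMem habSUp hSfin]
  have hKpumV : dmum a = Lbl.vee → clockCount Cp dmum = SUm.ncard + 1 := by
    intro hv
    have hnot : ¬ (dmum a = Lbl.wedge ∧ dmum b = Lbl.vee) := by
      rintro ⟨h, -⟩
      rw [hv] at h
      exact Lbl.noConfusion h
    rw [clockCount, hCpdec, sep_insert_pos ⟨hw1, hw2⟩, sep_insert_neg hnot,
      Set.ncard_insert_of_notMem (fun h => hsmSh h.1) hSfin2]
  have hKpumW : dmum a = Lbl.wedge → dmum b = Lbl.vee →
      clockCount Cp dmum = SUm.ncard + 2 := by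
    intro hw hv
    have hne2 : ((i-1, i) : ℤ × ℤ) ∉
        insert (a, b) {p ∈ Sh | dmum p.1 = Lbl.wedge ∧ dmum p.2 = Lbl.vee} := by
      rintro (h | h)
      · exact hq0ne h.symm
      · exact hsmSh h.1
    rw [clockCount, hCpdec, sep_insert_pos ⟨hw1, hw2⟩, sep_insert_pos ⟨hw, hv⟩,
      Set.ncard_insert_of_notMem hne2 (hSfin2.insert _),
      Set.ncard_insert_of_notMem habSUm hSfin2]
  -- Cm counts
  have hKmum : clockCount Cm dmum = SUm.ncard := by
    rw [clockCount, hCmdef, sep_insert_neg hum_ai, sep_insert_neg hum_ib]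
  have hKmupW : dmup a = Lbl.wedge → dmup b = Lbl.vee →
      clockCount Cm dmup = SUp.ncard + 2 := by
    intro hw hv
    have hib : ((i, b) : ℤ × ℤ) ∉ SUp := by
      intro h
      exact (hends _ h.1).2.1 rfl
    have hai : ((a, i-1) : ℤ × ℤ) ∉
        insert (i, b) {p ∈ Sh | dmup p.1 = Lbl.wedge ∧ dmup p.2 = Lbl.vee} := by
      rintro (h | h)
      · have := congrArg Prod.fst h
        simp only at this
        omega
      · exact (hendsab _ h.1).1 rfl
    rw [clockCount, hCmdef, sep_insert_pos ⟨hw, hu1⟩, sep_insert_pos ⟨hu2, hv⟩,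
      Set.ncard_insert_of_notMem hai (hSfin.insert _),
      Set.ncard_insert_of_notMem hib hSfin]
  -- orientation congruences
  have hcongr_mp : ∀ (x1 x2 : ℤ → Lbl), (∀ n, n ≠ i-1 → n ≠ i → x1 n = x2 n) →
      Cond134 dm Cm x1 → Cond134 dp Cp x2 := by
    intro x1 x2 hx
    refine cond134_congr (fun n hn => ?_)
    obtain ⟨w1, w2⟩ := hwallcapped n hn
    exact ⟨fun hc => hn ((hOnEq n).1 hc), htriv n, hx n w1 w2⟩
  have hcongr_pm : ∀ (x1 x2 : ℤ → Lbl), (∀ n, n ≠ i-1 → n ≠ i → x1 n = x2 n) →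
      Cond134 dp Cp x1 → Cond134 dm Cm x2 := by
    intro x1 x2 hx
    refine cond134_congr (fun n hn => ?_)
    have hn' : ¬ OnCap Cp n := fun hc => hn ((hOnEq n).2 hc)
    obtain ⟨w1, w2⟩ := hwallcapped n hn'
    exact ⟨hn', (htriv n).symm, hx n w1 w2⟩
  -- reading the labels of a, b from the new caps in Cm
  have hgetA : ∀ {x : ℤ → Lbl}, Oriented dm Cm x →
      (x a = Lbl.vee ∧ x (i-1) = Lbl.wedge) ∨ (x a = Lbl.wedge ∧ x (i-1) = Lbl.vee) :=
    fun hO => hO.2.1 (a, i-1) (Set.mem_insert _ _)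
  have hgetB : ∀ {x : ℤ → Lbl}, Oriented dm Cm x →
      (x i = Lbl.vee ∧ x b = Lbl.wedge) ∨ (x i = Lbl.wedge ∧ x b = Lbl.vee) :=
    fun hO => hO.2.1 (i, b) (Set.mem_insert_of_mem _ (Set.mem_insert _ _))
  -- build O_p from O_m
  have hm2p : ∀ (x1 x2 : ℤ → Lbl), (∀ n, n ≠ i-1 → n ≠ i → x1 n = x2 n) →
      ((x2 (i-1) = Lbl.vee ∧ x2 i = Lbl.wedge) ∨
        (x2 (i-1) = Lbl.wedge ∧ x2 i = Lbl.vee)) →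
      ((x2 a = Lbl.vee ∧ x2 b = Lbl.wedge) ∨ (x2 a = Lbl.wedge ∧ x2 b = Lbl.vee)) →
      Oriented dm Cm x1 → Oriented dp Cp x2 := by
    intro x1 x2 hx hsm hq0c hO
    obtain ⟨o1, o2, o3, o4⟩ := hO
    rw [oriented_iff]
    constructor
    · intro p hp
      by_cases h1 : p = (i-1, i)
      · rw [h1]; exact hsm
      · by_cases h2 : p = (a, b)
        · rw [h2]; exact hq0c
        · have hpSh : p ∈ Sh := ⟨⟨hp, by simpa using h1⟩, by simpa using h2⟩
          obtain ⟨e1, e2, e3, e4⟩ := hends p hpSh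
          rw [← hx _ e1 e2, ← hx _ e3 e4]
          exact o2 p (Or.inr (Or.inr hpSh))
    · exact hcongr_mp x1 x2 hx ⟨o1, o3, o4⟩
  -- build O_m from O_p
  have hp2m : ∀ (x1 x2 : ℤ → Lbl), (∀ n, n ≠ i-1 → n ≠ i → x1 n = x2 n) →
      ((x2 a = Lbl.vee ∧ x2 (i-1) = Lbl.wedge) ∨
        (x2 a = Lbl.wedge ∧ x2 (i-1) = Lbl.vee)) →
      ((x2 i = Lbl.vee ∧ x2 b = Lbl.wedge) ∨ (x2 i = Lbl.wedge ∧ x2 b = Lbl.vee)) →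
      Oriented dp Cp x1 → Oriented dm Cm x2 := by
    intro x1 x2 hx hc1 hc2 hO
    obtain ⟨o1, o2, o3, o4⟩ := hO
    rw [oriented_iff]
    constructor
    · rintro p (rfl | (rfl | hpSh))
      · exact hc1
      · exact hc2
      · obtain ⟨e1, e2, e3, e4⟩ := hends p hpSh
        rw [← hx _ e1 e2, ← hx _ e3 e4]
        exact o2 p (hshsub hpSh)
    · exact hcongr_pm x1 x2 hx ⟨o1, o3, o4⟩
  refine ⟨hStruct, ?_, ?_, ?_, ?_, ?_, ?_⟩
  · -- B1 : O_m(dmup) → ..., here x a = wedge, x b = vee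
    intro h
    have hA : dmup a = Lbl.wedge := by
      rcases hgetA h with ⟨h1, h2⟩ | ⟨h1, h2⟩
      · rw [hu1] at h2; exact absurd h2 (fun t => Lbl.noConfusion t)
      · exact h1
    have hB : dmup b = Lbl.vee := by
      rcases hgetB h with ⟨h1, h2⟩ | ⟨h1, h2⟩
      · rw [hu2] at h1; exact absurd h1 (fun t => Lbl.noConfusion t)
      · exact h2
    refine ⟨hm2p dmup dmup (fun _ _ _ => rfl) (Or.inl ⟨hu1, hu2⟩)
      (Or.inr ⟨hA, hB⟩) h, ?_⟩
    rw [hKpupW hA hB, hKmupW hA hB]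
  · -- B2 : O_m(dmum) → ..., here x a = vee, x b = wedge
    intro h
    have hA : dmum a = Lbl.vee := by
      rcases hgetA h with ⟨h1, h2⟩ | ⟨h1, h2⟩
      · exact h1
      · rw [hw1] at h2; exact absurd h2 (fun t => Lbl.noConfusion t)
    have hB : dmum b = Lbl.wedge := by
      rcases hgetB h with ⟨h1, h2⟩ | ⟨h1, h2⟩
      · exact h2
      · rw [hw2] at h1; exact absurd h1 (fun t => Lbl.noConfusion t)
    refine ⟨hm2p dmum dmup hxv (Or.inl ⟨hu1, hu2⟩)
      (Or.inl ⟨by rw [← hxa]; exact hA, by rw [← hxb]; exact hB⟩) h, ?_⟩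
    rw [hKpupV (by rw [← hxa]; exact hA), hKmum, hsame]
  · -- B3
    intro h
    rcases h.2.1 (a, b) hq0 with ⟨h1, h2⟩ | ⟨h1, h2⟩
    · refine Or.inr (hp2m dmup dmum (fun n e1 e2 => (hxv n e1 e2).symm)
        (Or.inl ⟨by rw [hxa]; exact h1, hw1⟩)
        (Or.inl ⟨hw2, by rw [hxb]; exact h2⟩) h)
    · refine Or.inl (hp2m dmup dmup (fun _ _ _ => rfl)
        (Or.inr ⟨h1, hu1⟩) (Or.inr ⟨hu2, h2⟩) h)
  · -- C1
    intro h
    have hA : dmum a = Lbl.vee := by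
      rcases hgetA h with ⟨h1, h2⟩ | ⟨h1, h2⟩
      · exact h1
      · rw [hw1] at h2; exact absurd h2 (fun t => Lbl.noConfusion t)
    have hB : dmum b = Lbl.wedge := by
      rcases hgetB h with ⟨h1, h2⟩ | ⟨h1, h2⟩
      · exact h2
      · rw [hw2] at h1; exact absurd h1 (fun t => Lbl.noConfusion t)
    refine ⟨hm2p dmum dmum (fun _ _ _ => rfl) (Or.inr ⟨hw1, hw2⟩)
      (Or.inl ⟨hA, hB⟩) h, ?_⟩
    rw [hKpumV hA, hKmum]
  · -- C2
    intro h
    have hA : dmup a = Lbl.wedge := by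
      rcases hgetA h with ⟨h1, h2⟩ | ⟨h1, h2⟩
      · rw [hu1] at h2; exact absurd h2 (fun t => Lbl.noConfusion t)
      · exact h1
    have hB : dmup b = Lbl.vee := by
      rcases hgetB h with ⟨h1, h2⟩ | ⟨h1, h2⟩
      · rw [hu2] at h1; exact absurd h1 (fun t => Lbl.noConfusion t)
      · exact h2
    refine ⟨hm2p dmup dmum (fun n e1 e2 => (hxv n e1 e2).symm) (Or.inr ⟨hw1, hw2⟩)
      (Or.inr ⟨by rw [hxa]; exact hA, by rw [hxb]; exact hB⟩) h, ?_⟩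
    rw [hKpumW (by rw [hxa]; exact hA) (by rw [hxb]; exact hB), hKmupW hA hB, hsame]
  · -- C3
    intro h
    rcases h.2.1 (a, b) hq0 with ⟨h1, h2⟩ | ⟨h1, h2⟩
    · refine Or.inr (hp2m dmum dmum (fun _ _ _ => rfl)
        (Or.inl ⟨h1, hw1⟩) (Or.inl ⟨hw2, h2⟩) h)
    · refine Or.inl (hp2m dmum dmup hxv
        (Or.inr ⟨by rw [← hxa]; exact h1, hu1⟩)
        (Or.inr ⟨hu2, by rw [← hxb]; exact h2⟩) h)
end CaseN
/-- Fact A: the two labellings cannot both be oriented for the lower diagram. -/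
lemma factA {dm : ℤ → Lbl} {i : ℤ} {Cm : Set (ℤ × ℤ)} {dmup dmum : ℤ → Lbl}
    (hm1 : dm (i-1) = Lbl.wedge) (hm2 : dm i = Lbl.vee)
    (SmC : Caps dm Cm)
    (hu1 : dmup (i-1) = Lbl.vee) (hu2 : dmup i = Lbl.wedge)
    (hw1 : dmum (i-1) = Lbl.wedge) (hw2 : dmum i = Lbl.vee)
    (hxv : ∀ n, n ≠ i-1 → n ≠ i → dmum n = dmup n) :
    ¬ (Oriented dm Cm dmup ∧ Oriented dm Cm dmum) := by
  rintro ⟨O1, O2⟩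
  by_cases hc : OnCap Cm (i-1)
  · obtain ⟨p, hp, hpe⟩ := hc
    have hpe2 : p.2 = i-1 := by
      rcases hpe with h | h
      · exfalso
        have := (SmC p hp).2.1
        rw [h, hm1] at this
        exact Lbl.noConfusion this
      · exact h
    have hcl : p.1 < i - 1 := by
      have := (SmC p hp).1
      omega
    have hc1 : p.1 ≠ i - 1 := by omega
    have hc2 : p.1 ≠ i := by omega
    have e1 : dmup p.1 = Lbl.wedge := by
      rcases O1.2.1 p hp with ⟨h1, h2⟩ | ⟨h1, h2⟩
      · rw [hpe2, hu1] at h2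
        exact absurd h2 (fun t => Lbl.noConfusion t)
      · exact h1
    have e2 : dmum p.1 = Lbl.vee := by
      rcases O2.2.1 p hp with ⟨h1, h2⟩ | ⟨h1, h2⟩
      · exact h1
      · rw [hpe2, hw1] at h2
        exact absurd h2 (fun t => Lbl.noConfusion t)
    rw [hxv p.1 hc1 hc2, e1] at e2
    exact Lbl.noConfusion e2
  · by_cases hc' : OnCap Cm i
    · obtain ⟨p, hp, hpe⟩ := hc'
      have hpe1 : p.1 = i := by
        rcases hpe with h | h
        · exact h
        · exfalso
          have := (SmC p hp).2.2
          rw [h, hm2] at this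
          exact Lbl.noConfusion this
      have hcl : i < p.2 := by
        have := (SmC p hp).1
        omega
      have hc1 : p.2 ≠ i - 1 := by omega
      have hc2 : p.2 ≠ i := by omega
      have e1 : dmup p.2 = Lbl.vee := by
        rcases O1.2.1 p hp with ⟨h1, h2⟩ | ⟨h1, h2⟩
        · rw [hpe1, hu2] at h1
          exact absurd h1 (fun t => Lbl.noConfusion t)
        · exact h2
      have e2 : dmum p.2 = Lbl.wedge := by
        rcases O2.2.1 p hp with ⟨h1, h2⟩ | ⟨h1, h2⟩
        · exact h2
        · rw [hpe1, hw2] at h1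
          exact absurd h1 (fun t => Lbl.noConfusion t)
      rw [hxv p.2 hc1 hc2, e1] at e2
      exact Lbl.noConfusion e2
    · exact O1.2.2.2 (i-1) i (by omega) hc hc'
        (by rw [hm1]; exact triv_wedge) (by rw [hm2]; exact triv_vee) ⟨hu1, hu2⟩
/-- Recursion at a wall: let `x_{λ⁺}` have a small cap at adjacent positions
`(i−1, i)` labelled `(∨, ∧)`, and let `x_{λ⁻}` agree with it except for labels
`(∧, ∨)` there.  For weights `μ⁺, μ⁻` in the block differing only in the same
two positions (with labels `(∨, ∧)` resp. `(∧, ∨)` there),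
`d_{λ⁺μ⁺}(q) = q⁻¹ d_{λ⁻μ⁺}(q) + d_{λ⁻μ⁻}(q)` and
`d_{λ⁺μ⁻}(q) = q d_{λ⁻μ⁻}(q) + d_{λ⁻μ⁺}(q)`. -/
theorem dPoly_wall_recursion (dp dm : ℤ → Lbl) (hdp : Bdd dp) (i : ℤ)
    (hp : dp (i - 1) = Lbl.vee ∧ dp i = Lbl.wedge)
    (hm : dm (i - 1) = Lbl.wedge ∧ dm i = Lbl.vee ∧
      ∀ n, n ≠ i - 1 → n ≠ i → dm n = dp n)
    (Cp Cm : Set (ℤ × ℤ)) (hCp : IsCapDiagram dp Cp) (hCm : IsCapDiagram dm Cm)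
    (hcap : (i - 1, i) ∈ Cp)
    (dmup dmum : ℤ → Lbl) (hblock : SameBlock dp dmup)
    (hmup : dmup (i - 1) = Lbl.vee ∧ dmup i = Lbl.wedge)
    (hmum : dmum (i - 1) = Lbl.wedge ∧ dmum i = Lbl.vee ∧
      ∀ n, n ≠ i - 1 → n ≠ i → dmum n = dmup n) :
    dPol dp Cp dmup =
      LaurentPolynomial.T (-1) * dPol dm Cm dmup + dPol dm Cm dmum ∧
    dPol dp Cp dmum =
      LaurentPolynomial.T 1 * dPol dm Cm dmum + dPol dm Cm dmup := by
  classical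
  obtain ⟨hb2, hb3, hb4⟩ := sameBlock_transfer hp hm hblock hmup hmum
  obtain ⟨SpC, SpD, SpN, SpS⟩ := struct_of_isCapDiagram hCp
  have Sm := struct_of_isCapDiagram hCm
  have hfin : Cp.Finite := caps_finite hdp SpC SpD
  obtain ⟨hp1, hp2⟩ := hp
  obtain ⟨hm1, hm2, hmv⟩ := hm
  obtain ⟨hu1, hu2⟩ := hmup
  obtain ⟨hw1, hw2, hxv⟩ := hmum
  have key : ∃ Cm', Struct dm Cm' ∧ Facts dp dm Cp Cm' dmup dmum := by
    by_cases hN : ∃ q ∈ Cp, q.1 < i-1 ∧ i < q.2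
    · -- case N : take an innermost containing cap
      have hex : ∃ w : ℕ, ∃ q, q ∈ Cp ∧ q.1 < i-1 ∧ i < q.2 ∧ (q.2 - q.1).toNat = w := by
        obtain ⟨q, hq, h1, h2⟩ := hN
        exact ⟨(q.2 - q.1).toNat, q, hq, h1, h2, rfl⟩
      obtain ⟨q, hq, h1, h2, hw⟩ := Nat.find_spec hex
      have hmin : ∀ r ∈ Cp, r.1 < i-1 → i < r.2 →
          (q.2 - q.1).toNat ≤ (r.2 - r.1).toNat := by
        intro r hr hr1 hr2
        rw [hw]
        by_contra hlt
        push_neg at hlt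
        exact Nat.find_min hex hlt ⟨r, hr, hr1, hr2, rfl⟩
      have hq' : (q.1, q.2) ∈ Cp := by rwa [Prod.mk.eta]
      exact ⟨_, caseN hp1 hp2 hm1 hm2 hmv SpC SpD SpN SpS hcap hfin
        hu1 hu2 hw1 hw2 hxv hq' h1 h2 hmin⟩
    · by_cases hL : ∃ a, a < i-1 ∧ dp a = Lbl.vee ∧ ¬ OnCap Cp a
      · -- case L : take the largest uncapped ∨ to the left
        have hex2 : ∃ k : ℕ, dp (i-2-(k:ℤ)) = Lbl.vee ∧ ¬ OnCap Cp (i-2-(k:ℤ)) := by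
          obtain ⟨a0, ha1, ha2, ha3⟩ := hL
          refine ⟨(i-2-a0).toNat, ?_, ?_⟩ <;>
            rw [show i-2-(((i-2-a0).toNat : ℕ) : ℤ) = a0 by omega]
          exacts [ha2, ha3]
        obtain ⟨hk1, hk2⟩ := Nat.find_spec hex2
        have hmax : ∀ c, i-2-((Nat.find hex2 : ℕ) : ℤ) < c → c < i-1 →
            dp c = Lbl.vee → OnCap Cp c := by
          intro c hc1 hc2 hc3
          by_contra hc4
          have hlt : (i-2-c).toNat < Nat.find hex2 := by omega
          refine Nat.find_min hex2 hlt ⟨?_, ?_⟩ <;>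
            rw [show i-2-(((i-2-c).toNat : ℕ) : ℤ) = c by omega]
          exacts [hc3, hc4]
        exact ⟨_, caseL hp1 hp2 hm1 hm2 hmv SpC SpD SpN SpS hcap hfin
          hu1 hu2 hw1 hw2 hxv hN (by omega) hk1 hk2 hmax⟩
      · by_cases hR : ∃ b, i < b ∧ dp b = Lbl.wedge ∧ ¬ OnCap Cp b
        · -- case R : take the smallest uncapped ∧ to the right
          have hex3 : ∃ k : ℕ, dp (i+1+(k:ℤ)) = Lbl.wedge ∧ ¬ OnCap Cp (i+1+(k:ℤ)) := by
            obtain ⟨b0, hb1, hb2', hb3⟩ := hR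
            refine ⟨(b0-i-1).toNat, ?_, ?_⟩ <;>
              rw [show i+1+(((b0-i-1).toNat : ℕ) : ℤ) = b0 by omega]
            exacts [hb2', hb3]
          obtain ⟨hk1, hk2⟩ := Nat.find_spec hex3
          have hmax : ∀ c, i < c → c < i+1+((Nat.find hex3 : ℕ) : ℤ) →
              dp c = Lbl.wedge → OnCap Cp c := by
            intro c hc1 hc2 hc3
            by_contra hc4
            have hlt : (c-i-1).toNat < Nat.find hex3 := by omega
            refine Nat.find_min hex3 hlt ⟨?_, ?_⟩ <;>
              rw [show i+1+(((c-i-1).toNat : ℕ) : ℤ) = c by omega]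
            exacts [hc3, hc4]
          exact ⟨_, caseR hp1 hp2 hm1 hm2 hmv SpC SpD SpN SpS hcap hfin
            hu1 hu2 hw1 hw2 hxv hN (by omega) hk1 hk2 hmax⟩
        · exact ⟨_, case0 hp1 hp2 hm1 hm2 hmv SpC SpD SpN SpS hcap hfin
            hu1 hu2 hw1 hw2 hxv hblock hb2 hN hL hR⟩
  obtain ⟨Cm', hS', hF⟩ := key
  have hCmeq : Cm = Cm' := struct_unique Sm hS'
  rw [hCmeq]
  obtain ⟨hB1, hB2, hB3, hC1, hC2, hC3⟩ := hF
  exact assemble hblock hb2 hb3 hb4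
    (factA hm1 hm2 hS'.1 hu1 hu2 hw1 hw2 hxv) hB1 hB2 hB3 hC1 hC2 hC3
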